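/- Let X and Y be nonempty compact metrizable spaces and let p₁ : X × Y → X be the projection onto the first factor. Then the induced map I(p₁) : I(X × Y) → I(X), defined by I(p₁)(μ)(φ) = μ(φ ∘ p₁) for φ ∈ C(X), is soft: for every paracompact Hausdorff topological space Z, every closed subset A ⊆ Z, and all continuous maps φ : A → I(X × Y) and ψ : Z → I(X) with I(p₁) ∘ φ = ψ restricted to A, there exists a continuous map Φ : Z → I(X × Y) such that I(p₁) ∘ Φ = ψ and Φ restricted to A equals φ. -/

import Mathlib

/-- An idempotent (Maslov) probability measure on a topological space `X` is a functional
`μ : C(X, ℝ) → ℝ` that is normalized on constants, shifts under addition of constants, and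
turns pointwise maxima into maxima. -/
def IsIdemMeasure {X : Type*} [TopologicalSpace X] (μ : C(X, ℝ) → ℝ) : Prop :=
  (∀ c : ℝ, μ (ContinuousMap.const X c) = c) ∧
  (∀ (c : ℝ) (φ : C(X, ℝ)), μ (ContinuousMap.const X c + φ) = c + μ φ) ∧
  (∀ φ ψ : C(X, ℝ), μ (φ ⊔ ψ) = max (μ φ) (μ ψ))

/-- The space `I(X)` of idempotent probability measures on `X`; as a subtype of the product
`(C(X, ℝ) → ℝ)` it automatically carries the weak* (pointwise convergence) topology. -/
abbrev IdemMeasure (X : Type*) [TopologicalSpace X] :=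
  {μ : C(X, ℝ) → ℝ // IsIdemMeasure μ}

/-- The pushforward `I(f) : I(X) → I(Y)` of functionals along a continuous map `f : X → Y`,
`I(f)(μ)(φ) = μ(φ ∘ f)`. -/
def pushF {X Y : Type*} [TopologicalSpace X] [TopologicalSpace Y] (f : C(X, Y))
    (μ : C(X, ℝ) → ℝ) : C(Y, ℝ) → ℝ :=
  fun φ => μ (φ.comp f)

open Classical
set_option linter.unusedSectionVars false

namespace IdemAux

/-! ### Basic lemmas -/
section Basic
variable {K : Type*} [TopologicalSpace K] {μ : C(K, ℝ) → ℝ}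

theorem mono (hμ : IsIdemMeasure μ) {f g : C(K, ℝ)} (h : f ≤ g) : μ f ≤ μ g := by
  have : f ⊔ g = g := sup_eq_right.mpr h
  have h2 := hμ.2.2 f g
  rw [this] at h2
  rw [h2]
  exact le_max_left _ _

theorem shift (hμ : IsIdemMeasure μ) (c : ℝ) (f : C(K, ℝ)) :
    μ (ContinuousMap.const K c + f) = c + μ f := hμ.2.1 c f

theorem shift' (hμ : IsIdemMeasure μ) (c : ℝ) (f : C(K, ℝ)) :
    μ (f + ContinuousMap.const K c) = μ f + c := by
  rw [add_comm f, hμ.2.1 c f, add_comm]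

theorem le_norm [CompactSpace K] (hμ : IsIdemMeasure μ) (f : C(K, ℝ)) : μ f ≤ ‖f‖ := by
  have h : f ≤ ContinuousMap.const K ‖f‖ := ContinuousMap.le_def.mpr fun x => by
    have h1 := f.norm_coe_le_norm x
    rw [Real.norm_eq_abs] at h1
    simpa using (le_abs_self (f x)).trans h1
  calc μ f ≤ μ (ContinuousMap.const K ‖f‖) := mono hμ h
  _ = ‖f‖ := hμ.1 _

theorem neg_norm_le [CompactSpace K] (hμ : IsIdemMeasure μ) (f : C(K, ℝ)) : -‖f‖ ≤ μ f := by
  have h : ContinuousMap.const K (-‖f‖) ≤ f := ContinuousMap.le_def.mpr fun x => by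
    have h1 := f.norm_coe_le_norm x
    rw [Real.norm_eq_abs] at h1
    have h2 := neg_abs_le (f x)
    simp only [ContinuousMap.const_apply]
    linarith
  calc -‖f‖ = μ (ContinuousMap.const K (-‖f‖)) := (hμ.1 _).symm
  _ ≤ μ f := mono hμ h

theorem abs_le_norm [CompactSpace K] (hμ : IsIdemMeasure μ) (f : C(K, ℝ)) : |μ f| ≤ ‖f‖ :=
  abs_le.mpr ⟨neg_norm_le hμ f, le_norm hμ f⟩

theorem sub_le_of_le_add [CompactSpace K] (hμ : IsIdemMeasure μ) (u v : C(K, ℝ)) :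
    μ u - μ v ≤ ‖u - v‖ := by
  have h : u ≤ v + ContinuousMap.const K ‖u - v‖ := ContinuousMap.le_def.mpr fun x => by
    have h2 := (u - v).norm_coe_le_norm x
    rw [Real.norm_eq_abs] at h2
    simp only [ContinuousMap.sub_apply] at h2
    have h1 : u x - v x ≤ |u x - v x| := le_abs_self _
    simp only [ContinuousMap.add_apply, ContinuousMap.const_apply]
    linarith
  have := mono hμ h
  rw [shift' hμ] at this
  linarith

theorem nonexpansive [CompactSpace K] (hμ : IsIdemMeasure μ) (f g : C(K, ℝ)) :
    |μ f - μ g| ≤ ‖f - g‖ := by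
  refine abs_le.mpr ⟨?_, sub_le_of_le_add hμ f g⟩
  have := sub_le_of_le_add hμ g f
  rw [show g - f = -(f - g) by ring, norm_neg] at this
  linarith

theorem sup'_map (hμ : IsIdemMeasure μ) {α : Type*} (s : Finset α) (hs : s.Nonempty)
    (g : α → C(K, ℝ)) : μ (s.sup' hs g) = s.sup' hs (fun a => μ (g a)) := by
  induction hs using Finset.Nonempty.cons_induction with
  | singleton a => simp
  | cons a s ha hs ih => rw [Finset.sup'_cons hs, Finset.sup'_cons hs, hμ.2.2, ih]

theorem nonempty_of_measure (hμ : IsIdemMeasure μ) : Nonempty K := by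
  by_contra h
  rw [not_nonempty_iff] at h
  have h0 := hμ.1 0
  have h1 := hμ.1 1
  have : (ContinuousMap.const K (0:ℝ)) = ContinuousMap.const K 1 := by
    ext x; exact (h.false x).elim
  rw [this, h1] at h0
  exact one_ne_zero h0

/-- Reconstruction: near-attainment of the functional by a density point. -/
theorem exists_point [CompactSpace K] (hμ : IsIdemMeasure μ) (f : C(K, ℝ)) {ε : ℝ}
    (hε : 0 < ε) : ∃ p : K, ∀ F : C(K, ℝ), μ f - ε - f p + F p ≤ μ F := by
  by_contra hcon
  push_neg at hcon
  choose F hF using hcon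
  set G : K → C(K, ℝ) := fun p => F p + ContinuousMap.const K (μ f - μ (F p)) with hG
  have hμG : ∀ p, μ (G p) = μ f := by
    intro p; rw [hG]; simp only; rw [shift' hμ]; ring
  have hGp : ∀ p, ε + f p < G p p := by
    intro p
    have := hF p
    simp only [hG, ContinuousMap.add_apply, ContinuousMap.const_apply]
    linarith
  set U : K → Set K := fun p => {q | f q + ε/2 < G p q} with hU
  have hUopen : ∀ p, IsOpen (U p) := by
    intro p
    exact isOpen_lt (by continuity) (G p).continuous
  have hcover : (Set.univ : Set K) ⊆ ⋃ p, U p := by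
    intro q _
    refine Set.mem_iUnion.mpr ⟨q, ?_⟩
    have := hGp q
    simp only [hU, Set.mem_setOf_eq]
    linarith
  obtain ⟨t, ht⟩ := isCompact_univ.elim_finite_subcover U hUopen hcover
  have hK : Nonempty K := nonempty_of_measure hμ
  have htne : t.Nonempty := by
    obtain ⟨kk⟩ := hK
    have := ht (Set.mem_univ kk)
    rw [Set.mem_iUnion₂] at this
    obtain ⟨p, hp, _⟩ := this
    exact ⟨p, hp⟩
  set h := t.sup' htne G with hh
  have hμh : μ h = μ f := by
    rw [hh, sup'_map hμ]
    apply le_antisymm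
    · exact Finset.sup'_le _ _ fun p _ => le_of_eq (hμG p)
    · obtain ⟨p, hp⟩ := htne
      exact (le_of_eq (hμG p).symm).trans (Finset.le_sup' (fun a => μ (G a)) hp)
  have hfh : f + ContinuousMap.const K (ε/2) ≤ h := by
    refine ContinuousMap.le_def.mpr fun q => ?_
    have := ht (Set.mem_univ q)
    rw [Set.mem_iUnion₂] at this
    obtain ⟨p, hp, hq⟩ := this
    simp only [hU, Set.mem_setOf_eq] at hq
    have hle : (G p) q ≤ h q := by
      have h2 : G p ≤ t.sup' htne G := Finset.le_sup' G hp
      exact ContinuousMap.le_def.mp h2 q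
    simp only [ContinuousMap.add_apply, ContinuousMap.const_apply]
    linarith
  have := mono hμ hfh
  rw [shift' hμ, hμh] at this
  linarith

end Basic

/-! ### Real sup helper lemmas -/
section Real
variable {ι : Type*} [Nonempty ι]

theorem bddAbove_of_le {v : ι → ℝ} {B : ℝ} (h : ∀ i, v i ≤ B) : BddAbove (Set.range v) :=
  ⟨B, by rintro _ ⟨i, rfl⟩; exact h i⟩

theorem ciSup_add_const {v : ι → ℝ} (hb : BddAbove (Set.range v)) (c : ℝ) :
    (⨆ i, (c + v i)) = c + ⨆ i, v i := by
  apply le_antisymm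
  · exact ciSup_le fun i => add_le_add_right (le_ciSup hb i) c
  · have h2 : BddAbove (Set.range fun i => c + v i) := by
      obtain ⟨B, hB⟩ := hb
      refine bddAbove_of_le (B := c + B) fun i => ?_
      exact add_le_add_right (hB ⟨i, rfl⟩) c
    have : (⨆ i, v i) ≤ (⨆ i, (c + v i)) - c := by
      refine ciSup_le fun i => ?_
      have := le_ciSup h2 i
      linarith
    linarith

theorem ciSup_max {u v : ι → ℝ} (hu : BddAbove (Set.range u)) (hv : BddAbove (Set.range v)) :
    (⨆ i, max (u i) (v i)) = max (⨆ i, u i) (⨆ i, v i) := by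
  have hmax : BddAbove (Set.range fun i => max (u i) (v i)) := by
    obtain ⟨B, hB⟩ := hu; obtain ⟨C, hC⟩ := hv
    refine bddAbove_of_le (B := max B C) fun j => ?_
    exact max_le_max (hB ⟨j, rfl⟩) (hC ⟨j, rfl⟩)
  apply le_antisymm
  · refine ciSup_le fun i => ?_
    exact max_le_max (le_ciSup hu i) (le_ciSup hv i)
  · refine max_le (ciSup_le fun i => ?_) (ciSup_le fun i => ?_)
    · exact (le_max_left (u i) (v i)).trans (le_ciSup hmax i)
    · exact (le_max_right (u i) (v i)).trans (le_ciSup hmax i)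

end Real

/-! ### Geometric layer: cones, mollified conditional densities -/
section Geometry
variable {X Y : Type*} [MetricSpace X] [CompactSpace X] [Nonempty X]
  [MetricSpace Y] [CompactSpace Y] [Nonempty Y]

/-- Projection to the first factor as a continuous map. -/
def prX : C(X × Y, X) := ⟨Prod.fst, continuous_fst⟩

theorem prX_apply (p : X × Y) : prX p = p.1 := rfl

theorem comp_prX_apply (g : C(X, ℝ)) (p : X × Y) : (g.comp prX) p = g p.1 := rfl

/-- The cone function `-(k/2) * dist · x`. -/
noncomputable def gk (k : ℝ) (x : X) : C(X, ℝ) :=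
  ⟨fun u => -(k/2 * dist u x), by fun_prop⟩

theorem gk_apply (k : ℝ) (x u : X) : gk k x u = -(k/2 * dist u x) := rfl

theorem gk_self (k : ℝ) (x : X) : gk k x x = 0 := by simp [gk_apply]

theorem gk_nonpos {k : ℝ} (hk : 0 ≤ k) (x u : X) : gk k x u ≤ 0 := by
  rw [gk_apply]
  have : 0 ≤ k/2 * dist u x := mul_nonneg (by linarith) dist_nonneg
  linarith

theorem norm_comp_prX_le (f : C(X, ℝ)) : ‖f.comp (prX (Y := Y))‖ ≤ ‖f‖ := by
  refine ContinuousMap.norm_le _ (norm_nonneg f) |>.mpr fun p => ?_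
  exact f.norm_coe_le_norm _

theorem gk_sub_norm {k : ℝ} (hk : 0 ≤ k) (x x' : X) :
    ‖gk k x - gk k x'‖ ≤ k/2 * dist x x' := by
  refine ContinuousMap.norm_le _ (mul_nonneg (by linarith) dist_nonneg) |>.mpr fun u => ?_
  simp only [ContinuousMap.sub_apply, gk_apply, Real.norm_eq_abs]
  rw [show -(k/2 * dist u x) - -(k/2 * dist u x') = k/2 * (dist u x' - dist u x) by ring]
  rw [abs_mul, abs_of_nonneg (by linarith : (0:ℝ) ≤ k/2)]
  have h1 : |dist x' u - dist x u| ≤ dist x' x := abs_dist_sub_le x' x u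
  rw [dist_comm x' u, dist_comm x u, dist_comm x' x] at h1
  exact mul_le_mul_of_nonneg_left h1 (by linarith)

variable (μ : C(X × Y, ℝ) → ℝ)

/-- The mollified marginal value `ν_{k/2}(x)`. -/
noncomputable def nuk (k : ℝ) (x : X) : ℝ := μ ((gk k x).comp prX)

theorem nuk_le_zero {μ : C(X × Y, ℝ) → ℝ} (hμ : IsIdemMeasure μ) {k : ℝ} (hk : 0 ≤ k)
    (x : X) : nuk μ k x ≤ 0 := by
  have h : (gk k x).comp (prX (Y := Y)) ≤ ContinuousMap.const _ 0 :=
    ContinuousMap.le_def.mpr fun p => gk_nonpos hk x _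
  have := mono hμ h
  rwa [hμ.1 0] at this

theorem nuk_lip {μ : C(X × Y, ℝ) → ℝ} (hμ : IsIdemMeasure μ) {k : ℝ} (hk : 0 ≤ k)
    (x x' : X) : nuk μ k x ≤ nuk μ k x' + k/2 * dist x x' := by
  have h := sub_le_of_le_add hμ ((gk k x).comp (prX (Y := Y))) ((gk k x').comp prX)
  have h2 : (gk k x).comp (prX (Y := Y)) - (gk k x').comp prX
      = (gk k x - gk k x').comp prX := by
    ext p; simp [ContinuousMap.comp_apply, ContinuousMap.sub_apply]
  rw [h2] at h
  have h3 := (norm_comp_prX_le (Y := Y) (gk k x - gk k x')).trans (gk_sub_norm hk x x')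
  unfold nuk
  linarith

/-- The set defining the mollified conditional density `w̃(x,y)`. -/
def Tset (k W0 : ℝ) (x : X) (y : Y) : Set ℝ :=
  insert (-W0) {t | ∃ x' : X, ∀ F : C(X × Y, ℝ),
    t + F (x', y) + k/2 * dist x' x + nuk μ k x ≤ μ F}

/-- The mollified conditional density. -/
noncomputable def wt (k W0 : ℝ) (x : X) (y : Y) : ℝ := sSup (Tset μ k W0 x y)

variable {μ}

theorem Tset_le_zero (hμ : IsIdemMeasure μ) (k : ℝ) {W0 : ℝ} (hW0 : 0 ≤ W0) (x : X) (y : Y) :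
    ∀ t ∈ Tset μ k W0 x y, t ≤ 0 := by
  rintro t (rfl | ⟨x', hx'⟩)
  · linarith
  · have := hx' ((gk k x).comp prX)
    rw [comp_prX_apply, gk_apply] at this
    have hnuk : nuk μ k x = μ ((gk k x).comp prX) := rfl
    linarith

theorem Tset_nonempty (k W0 : ℝ) (x : X) (y : Y) : (Tset μ k W0 x y).Nonempty :=
  ⟨-W0, Set.mem_insert _ _⟩

theorem Tset_bddAbove (hμ : IsIdemMeasure μ) (k : ℝ) {W0 : ℝ} (hW0 : 0 ≤ W0) (x : X) (y : Y) :
    BddAbove (Tset μ k W0 x y) :=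
  ⟨0, fun t ht => Tset_le_zero hμ k hW0 x y t ht⟩

theorem wt_le_zero (hμ : IsIdemMeasure μ) (k : ℝ) {W0 : ℝ} (hW0 : 0 ≤ W0) (x : X) (y : Y) :
    wt μ k W0 x y ≤ 0 :=
  csSup_le (Tset_nonempty k W0 x y) (Tset_le_zero hμ k hW0 x y)

theorem neg_W0_le_wt (hμ : IsIdemMeasure μ) (k : ℝ) {W0 : ℝ} (hW0 : 0 ≤ W0) (x : X) (y : Y) :
    -W0 ≤ wt μ k W0 x y :=
  le_csSup (Tset_bddAbove hμ k hW0 x y) (Set.mem_insert _ _)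

/-- Transfer of elements of `Tset` under change of base point. -/
theorem Tset_transfer (hμ : IsIdemMeasure μ) {k W0 : ℝ} (hk : 0 ≤ k) (x x' : X) (y : Y)
    {t : ℝ} (ht : t ∈ Tset μ k W0 x y) (htT : t ≠ -W0 ∨ True) :
    t - k * dist x x' ∈ Tset μ k W0 x' y ∨ t = -W0 := by
  rcases ht with rfl | ⟨x'', hx''⟩
  · right; rfl
  · left
    refine Set.mem_insert_iff.mpr (Or.inr ⟨x'', fun F => ?_⟩)
    have h1 := hx'' F
    have h2 : dist x'' x' ≤ dist x'' x + dist x x' := dist_triangle x'' x x'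
    have h3 := nuk_lip hμ hk x' x
    have h4 : k/2 * dist x'' x' ≤ k/2 * dist x'' x + k/2 * dist x x' := by
      have := mul_le_mul_of_nonneg_left h2 (by linarith : (0:ℝ) ≤ k/2)
      linarith [this]
    rw [dist_comm x' x] at h3
    nlinarith [dist_nonneg (x := x) (y := x')]

theorem wt_lip (hμ : IsIdemMeasure μ) {k W0 : ℝ} (hk : 0 ≤ k) (hW0 : 0 ≤ W0)
    (x x' : X) (y : Y) : wt μ k W0 x y - k * dist x x' ≤ wt μ k W0 x' y := by
  have hkd : 0 ≤ k * dist x x' := mul_nonneg hk dist_nonneg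
  rw [sub_le_iff_le_add]
  refine csSup_le (Tset_nonempty k W0 x y) fun t ht => ?_
  rcases Tset_transfer hμ hk x x' y ht (Or.inr trivial) with h | rfl
  · have := le_csSup (Tset_bddAbove hμ k hW0 x' y) h
    unfold wt
    linarith
  · have := neg_W0_le_wt hμ k hW0 x' y
    linarith

/-- Near-attainment of `0` by `wt` in the `y` direction. -/
theorem exists_wt_near_zero (hμ : IsIdemMeasure μ) {k W0 : ℝ} (hW0 : 0 ≤ W0) (x : X)
    {ε : ℝ} (hε : 0 < ε) : ∃ y : Y, -ε ≤ wt μ k W0 x y := by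
  obtain ⟨p, hp⟩ := exists_point hμ ((gk k x).comp (prX (Y := Y))) hε
  refine ⟨p.2, ?_⟩
  have hmem : -ε ∈ Tset μ k W0 x p.2 := by
    refine Set.mem_insert_iff.mpr (Or.inr ⟨p.1, fun F => ?_⟩)
    have := hp F
    rw [comp_prX_apply, gk_apply] at this
    have hnuk : nuk μ k x = μ ((gk k x).comp prX) := rfl
    have hprod : ((p.1 : X), (p.2 : Y)) = p := Prod.ext rfl rfl
    rw [hprod]
    linarith
  exact le_csSup (Tset_bddAbove hμ k hW0 x p.2) hmem

end Geometry

/-! ### The Θ and y-sup operators -/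
section Theta
variable {X Y : Type*} [MetricSpace X] [CompactSpace X] [Nonempty X]
  [MetricSpace Y] [CompactSpace Y] [Nonempty Y]

theorem dist_pair_fst (x x' : X) (y : Y) : dist ((x, y) : X × Y) (x', y) = dist x x' := by
  rw [Prod.dist_eq, dist_self]
  exact max_eq_left dist_nonneg

variable (μ : C(X × Y, ℝ) → ℝ)

/-- The Θ operator: `Θf(x) = sup_y (f(x,y) + w̃(x,y))`. -/
noncomputable def Theta (k W0 : ℝ) (f₀ : C(X × Y, ℝ)) (x : X) : ℝ :=
  ⨆ y : Y, (f₀ (x, y) + wt μ k W0 x y)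

/-- The fiberwise sup operator `h_f(x) = sup_y f(x,y)`. -/
noncomputable def ysup (f₀ : C(X × Y, ℝ)) (x : X) : ℝ := ⨆ y : Y, f₀ (x, y)

variable {μ}

theorem theta_bdd (hμ : IsIdemMeasure μ) {k W0 : ℝ} (hW0 : 0 ≤ W0) (f₀ : C(X × Y, ℝ))
    (x : X) : BddAbove (Set.range fun y : Y => f₀ (x, y) + wt μ k W0 x y) := by
  refine bddAbove_of_le (B := ‖f₀‖) fun y => ?_
  have h1 : f₀ (x, y) ≤ ‖f₀‖ := by
    have := f₀.norm_coe_le_norm (x, y)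
    rw [Real.norm_eq_abs] at this
    exact (le_abs_self _).trans this
  have h2 := wt_le_zero hμ k hW0 x y
  linarith

theorem theta_le_norm (hμ : IsIdemMeasure μ) {k W0 : ℝ} (hW0 : 0 ≤ W0) (f₀ : C(X × Y, ℝ))
    (x : X) : Theta μ k W0 f₀ x ≤ ‖f₀‖ := by
  refine ciSup_le fun y => ?_
  have h1 : f₀ (x, y) ≤ ‖f₀‖ := by
    have := f₀.norm_coe_le_norm (x, y)
    rw [Real.norm_eq_abs] at this
    exact (le_abs_self _).trans this
  have h2 := wt_le_zero hμ k hW0 x y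
  linarith

theorem theta_diff_le (hμ : IsIdemMeasure μ) {k W0 : ℝ} (hk : 0 ≤ k) (hW0 : 0 ≤ W0)
    (f₀ : C(X × Y, ℝ)) (x x' : X) {η : ℝ}
    (hη : ∀ y : Y, |f₀ (x, y) - f₀ (x', y)| ≤ η) :
    Theta μ k W0 f₀ x ≤ Theta μ k W0 f₀ x' + (η + k * dist x x') := by
  refine ciSup_le fun y => ?_
  have h1 : f₀ (x, y) ≤ f₀ (x', y) + η := by
    have := (hη y); have := le_abs_self (f₀ (x,y) - f₀ (x',y)); linarith [abs_le.mp (hη y)]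
  have h2 : wt μ k W0 x y - k * dist x x' ≤ wt μ k W0 x' y := wt_lip hμ hk hW0 x x' y
  have h3 : f₀ (x', y) + wt μ k W0 x' y ≤ Theta μ k W0 f₀ x' :=
    le_ciSup (theta_bdd hμ hW0 f₀ x') y
  linarith

theorem theta_continuous (hμ : IsIdemMeasure μ) {k W0 : ℝ} (hk : 0 ≤ k) (hW0 : 0 ≤ W0)
    (f₀ : C(X × Y, ℝ)) : Continuous (Theta μ k W0 f₀) := by
  rw [Metric.continuous_iff]
  intro x ε hε
  have huc : UniformContinuous f₀ := CompactSpace.uniformContinuous_of_continuous f₀.continuous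
  rw [Metric.uniformContinuous_iff] at huc
  obtain ⟨δ₁, hδ₁, hδ₁'⟩ := huc (ε/4) (by linarith)
  refine ⟨min δ₁ (ε/(4*(k+1))), lt_min hδ₁ (by positivity), fun x' hx' => ?_⟩
  have hd1 : dist x' x < δ₁ := lt_of_lt_of_le hx' (min_le_left _ _)
  have hd2 : dist x' x < ε/(4*(k+1)) := lt_of_lt_of_le hx' (min_le_right _ _)
  have hmod : ∀ y : Y, |f₀ (x', y) - f₀ (x, y)| ≤ ε/4 := by
    intro y
    have : dist ((x', y) : X × Y) (x, y) < δ₁ := by rwa [dist_pair_fst]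
    have := hδ₁' this
    rw [Real.dist_eq] at this
    linarith
  have hmod' : ∀ y : Y, |f₀ (x, y) - f₀ (x', y)| ≤ ε/4 := by
    intro y; rw [abs_sub_comm]; exact hmod y
  have hkd : k * dist x' x ≤ ε/4 := by
    have hk1 : k * dist x' x ≤ k * (ε/(4*(k+1))) :=
      mul_le_mul_of_nonneg_left hd2.le hk
    have h4 : (0:ℝ) < 4*(k+1) := by linarith
    have ht : ε/(4*(k+1)) * (4*(k+1)) = ε := div_mul_cancel₀ _ (ne_of_gt h4)
    have ht0 : (0:ℝ) ≤ ε/(4*(k+1)) := by positivity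
    nlinarith [ht, ht0, hk]
  have h1 := theta_diff_le hμ hk hW0 f₀ x' x hmod
  have h2 := theta_diff_le hμ hk hW0 f₀ x x' hmod'
  rw [Real.dist_eq]
  rw [dist_comm x x'] at h2
  have : |Theta μ k W0 f₀ x' - Theta μ k W0 f₀ x| ≤ ε/4 + ε/4 := by
    rw [abs_le]; constructor <;> linarith
  linarith

/-- Θ as a continuous map. -/
noncomputable def ThetaCM (hμ : IsIdemMeasure μ) {k W0 : ℝ} (hk : 0 ≤ k) (hW0 : 0 ≤ W0)
    (f₀ : C(X × Y, ℝ)) : C(X, ℝ) :=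
  ⟨Theta μ k W0 f₀, theta_continuous hμ hk hW0 f₀⟩

theorem ThetaCM_apply (hμ : IsIdemMeasure μ) {k W0 : ℝ} (hk : 0 ≤ k) (hW0 : 0 ≤ W0)
    (f₀ : C(X × Y, ℝ)) (x : X) : ThetaCM hμ hk hW0 f₀ x = Theta μ k W0 f₀ x := rfl

theorem ciSup_wt_eq_zero (hμ : IsIdemMeasure μ) {k W0 : ℝ} (hW0 : 0 ≤ W0) (x : X) :
    (⨆ y : Y, wt μ k W0 x y) = 0 := by
  apply le_antisymm
  · exact ciSup_le fun y => wt_le_zero hμ k hW0 x y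
  · by_contra hcon
    push_neg at hcon
    obtain ⟨y, hy⟩ := exists_wt_near_zero (k := k) hμ hW0 x
      (ε := -(⨆ y : Y, wt μ k W0 x y)/2) (by linarith)
    have hb : BddAbove (Set.range fun y : Y => wt μ k W0 x y) :=
      bddAbove_of_le fun y => wt_le_zero hμ k hW0 x y
    have := le_ciSup hb y
    linarith

theorem theta_comp_prX (hμ : IsIdemMeasure μ) {k W0 : ℝ} (hW0 : 0 ≤ W0) (g : C(X, ℝ))
    (x : X) : Theta μ k W0 (g.comp prX) x = g x := by
  unfold Theta
  have : ∀ y : Y, (g.comp prX) (x, y) = g x := fun y => rfl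
  simp_rw [this]
  have hb : BddAbove (Set.range fun y : Y => wt μ k W0 x y) :=
    bddAbove_of_le fun y => wt_le_zero hμ k hW0 x y
  rw [ciSup_add_const hb (g x), ciSup_wt_eq_zero hμ hW0 x, add_zero]

theorem theta_add_const (hμ : IsIdemMeasure μ) {k W0 : ℝ} (hW0 : 0 ≤ W0) (c : ℝ)
    (f₀ : C(X × Y, ℝ)) (x : X) :
    Theta μ k W0 (ContinuousMap.const (X × Y) c + f₀) x = c + Theta μ k W0 f₀ x := by
  unfold Theta
  have h : ∀ y : Y, (ContinuousMap.const (X × Y) c + f₀) (x, y) + wt μ k W0 x y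
      = c + (f₀ (x, y) + wt μ k W0 x y) := fun y => by
    simp only [ContinuousMap.add_apply, ContinuousMap.const_apply]; ring
  simp_rw [h]
  exact ciSup_add_const (theta_bdd hμ hW0 f₀ x) c

theorem theta_sup (hμ : IsIdemMeasure μ) {k W0 : ℝ} (hW0 : 0 ≤ W0)
    (f₀ f₁ : C(X × Y, ℝ)) (x : X) :
    Theta μ k W0 (f₀ ⊔ f₁) x = max (Theta μ k W0 f₀ x) (Theta μ k W0 f₁ x) := by
  unfold Theta
  have : ∀ y : Y, (f₀ ⊔ f₁) (x, y) + wt μ k W0 x y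
      = max (f₀ (x, y) + wt μ k W0 x y) (f₁ (x, y) + wt μ k W0 x y) := fun y => by
    simp [ContinuousMap.sup_apply, max_add_add_right]
  simp_rw [this]
  exact ciSup_max (theta_bdd hμ hW0 f₀ x) (theta_bdd hμ hW0 f₁ x)

/-- Safety estimate for Θ. -/
theorem theta_safety (hμ : IsIdemMeasure μ) {k W0 C0 Δ ε₁ : ℝ} (hk : 0 ≤ k)
    (hW0 : W0 = 2*C0+1) (hC0 : 0 ≤ C0) (hε₁ : 0 < ε₁) (hΔ : 0 < Δ)
    (f₀ : C(X × Y, ℝ)) (hf₀n : ‖f₀‖ ≤ C0)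
    (hmod : ∀ (x x' : X) (y : Y), dist x x' ≤ Δ → |f₀ (x, y) - f₀ (x', y)| ≤ ε₁)
    (hk1 : 2*C0+1 ≤ k/2*Δ) (x : X) :
    nuk μ k x + Theta μ k W0 f₀ x ≤ μ f₀ + ε₁ := by
  have hW0' : 0 ≤ W0 := by rw [hW0]; linarith
  have hpt : ∀ p : X × Y, |f₀ p| ≤ C0 := fun p => by
    have := f₀.norm_coe_le_norm p
    rw [Real.norm_eq_abs] at this
    exact this.trans hf₀n
  have hμf : -C0 ≤ μ f₀ := by
    have := neg_norm_le hμ f₀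
    linarith
  have hnuk := nuk_le_zero hμ hk x
  have key : ∀ y : Y, wt μ k W0 x y ≤ μ f₀ + ε₁ - nuk μ k x - f₀ (x, y) := by
    intro y
    refine csSup_le (Tset_nonempty k W0 x y) ?_
    rintro t (rfl | ⟨x', hx'⟩)
    · have h1 := abs_le.mp (hpt (x, y))
      rw [hW0]
      linarith
    · have h1 := hx' f₀
      rcases le_or_gt (dist x' x) Δ with hd | hd
      · have hd' : dist x x' ≤ Δ := by rwa [dist_comm]
        have h2 := abs_le.mp (hmod x x' y hd')
        have h3 : 0 ≤ k/2 * dist x' x := mul_nonneg (by linarith) dist_nonneg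
        linarith
      · have h2 := abs_le.mp (hpt (x, y))
        have h3 := abs_le.mp (hpt (x', y))
        have h4 : k/2 * Δ ≤ k/2 * dist x' x :=
          mul_le_mul_of_nonneg_left hd.le (by linarith)
        linarith
  have hTheta : Theta μ k W0 f₀ x ≤ μ f₀ + ε₁ - nuk μ k x := by
    refine ciSup_le fun y => ?_
    have := key y
    linarith
  linarith

end Theta

/-! ### The fiberwise sup and canonical section -/
section Ysup
variable {X Y : Type*} [MetricSpace X] [CompactSpace X] [Nonempty X]
  [MetricSpace Y] [CompactSpace Y] [Nonempty Y]

theorem ysup_bdd (f₀ : C(X × Y, ℝ)) (x : X) :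
    BddAbove (Set.range fun y : Y => f₀ (x, y)) :=
  bddAbove_of_le fun y => by
    have := f₀.norm_coe_le_norm (x, y)
    rw [Real.norm_eq_abs] at this
    exact (le_abs_self _).trans this

theorem ysup_le_norm (f₀ : C(X × Y, ℝ)) (x : X) : ysup f₀ x ≤ ‖f₀‖ := by
  refine ciSup_le fun y => ?_
  have := f₀.norm_coe_le_norm (x, y)
  rw [Real.norm_eq_abs] at this
  exact (le_abs_self _).trans this

theorem le_ysup (f₀ : C(X × Y, ℝ)) (p : X × Y) : f₀ p ≤ ysup f₀ p.1 := by
  have := le_ciSup (ysup_bdd f₀ p.1) p.2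
  exact this

theorem ysup_diff_le (f₀ : C(X × Y, ℝ)) (x x' : X) {η : ℝ}
    (hη : ∀ y : Y, |f₀ (x, y) - f₀ (x', y)| ≤ η) :
    ysup f₀ x ≤ ysup f₀ x' + η := by
  refine ciSup_le fun y => ?_
  have h1 := abs_le.mp (hη y)
  have h3 : f₀ (x', y) ≤ ysup f₀ x' := le_ysup f₀ (x', y)
  linarith

theorem ysup_continuous (f₀ : C(X × Y, ℝ)) : Continuous (ysup (X := X) (Y := Y) f₀) := by
  rw [Metric.continuous_iff]
  intro x ε hε
  have huc : UniformContinuous f₀ := CompactSpace.uniformContinuous_of_continuous f₀.continuous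
  rw [Metric.uniformContinuous_iff] at huc
  obtain ⟨δ₁, hδ₁, hδ₁'⟩ := huc (ε/2) (by linarith)
  refine ⟨δ₁, hδ₁, fun x' hx' => ?_⟩
  have hmod : ∀ y : Y, |f₀ (x', y) - f₀ (x, y)| ≤ ε/2 := by
    intro y
    have : dist ((x', y) : X × Y) (x, y) < δ₁ := by rwa [dist_pair_fst]
    have := hδ₁' this
    rw [Real.dist_eq] at this
    linarith
  have hmod' : ∀ y : Y, |f₀ (x, y) - f₀ (x', y)| ≤ ε/2 := fun y => by
    rw [abs_sub_comm]; exact hmod y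
  have h1 := ysup_diff_le f₀ x' x hmod
  have h2 := ysup_diff_le f₀ x x' hmod'
  rw [Real.dist_eq, abs_lt]
  constructor <;> linarith

/-- `ysup` as a continuous map. -/
noncomputable def ysupCM (f₀ : C(X × Y, ℝ)) : C(X, ℝ) := ⟨ysup f₀, ysup_continuous f₀⟩

theorem ysupCM_apply (f₀ : C(X × Y, ℝ)) (x : X) : ysupCM f₀ x = ysup f₀ x := rfl

theorem ysupCM_comp_prX (g : C(X, ℝ)) : ysupCM ((g.comp prX : C(X × Y, ℝ))) = g := by
  ext x
  show (⨆ _ : Y, g x) = g x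
  exact ciSup_const

theorem ysupCM_const (c : ℝ) :
    ysupCM (ContinuousMap.const (X × Y) c) = ContinuousMap.const X c := by
  ext x
  show (⨆ _ : Y, c) = c
  exact ciSup_const

theorem ysupCM_add_const (c : ℝ) (f₀ : C(X × Y, ℝ)) :
    ysupCM (ContinuousMap.const (X × Y) c + f₀) = ContinuousMap.const X c + ysupCM f₀ := by
  ext x
  show (⨆ y : Y, (ContinuousMap.const (X × Y) c + f₀) (x, y))
    = c + ⨆ y : Y, f₀ (x, y)
  have h : ∀ y : Y, (ContinuousMap.const (X × Y) c + f₀) (x, y) = c + f₀ (x, y) := fun y => by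
    simp only [ContinuousMap.add_apply, ContinuousMap.const_apply]
  simp_rw [h]
  exact ciSup_add_const (ysup_bdd f₀ x) c

theorem ysupCM_sup (f₀ f₁ : C(X × Y, ℝ)) :
    ysupCM (f₀ ⊔ f₁) = ysupCM f₀ ⊔ ysupCM f₁ := by
  ext x
  show (⨆ y : Y, (f₀ ⊔ f₁) (x, y)) = max (⨆ y : Y, f₀ (x, y)) (⨆ y : Y, f₁ (x, y))
  have h : ∀ y : Y, (f₀ ⊔ f₁) (x, y) = max (f₀ (x, y)) (f₁ (x, y)) := fun y => by
    simp [ContinuousMap.sup_apply]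
  simp_rw [h]
  exact ciSup_max (ysup_bdd f₀ x) (ysup_bdd f₁ x)

theorem le_ysupCM_comp (f₀ : C(X × Y, ℝ)) : f₀ ≤ (ysupCM f₀).comp prX :=
  ContinuousMap.le_def.mpr fun p => by
    rw [ContinuousMap.comp_apply]
    exact le_ysup f₀ p

/-- The canonical section `s(ν)(f) = ν(x ↦ max_y f(x,y))`. -/
noncomputable def sFloor (ν : C(X, ℝ) → ℝ) (f₀ : C(X × Y, ℝ)) : ℝ := ν (ysupCM f₀)

theorem sFloor_isMeasure {ν : C(X, ℝ) → ℝ} (hν : IsIdemMeasure ν) :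
    IsIdemMeasure (sFloor (X := X) (Y := Y) ν) := by
  refine ⟨fun c => ?_, fun c f₀ => ?_, fun f₀ f₁ => ?_⟩
  · rw [sFloor, ysupCM_const, hν.1]
  · rw [sFloor, ysupCM_add_const, hν.2.1, sFloor]
  · rw [sFloor, ysupCM_sup, hν.2.2, sFloor, sFloor]

theorem sFloor_marginal (ν : C(X, ℝ) → ℝ) (g : C(X, ℝ)) :
    sFloor (X := X) (Y := Y) ν (g.comp prX) = ν g := by
  rw [sFloor, ysupCM_comp_prX]

/-- The canonical section dominates every measure in the fiber. -/
theorem le_sFloor {μ' : C(X × Y, ℝ) → ℝ} {ν : C(X, ℝ) → ℝ} (hμ' : IsIdemMeasure μ')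
    (hm : ∀ g : C(X, ℝ), μ' (g.comp prX) = ν g) (f₀ : C(X × Y, ℝ)) :
    μ' f₀ ≤ sFloor ν f₀ := by
  have h := mono hμ' (le_ysupCM_comp f₀)
  rwa [hm (ysupCM f₀)] at h

theorem sFloor_le_norm {ν : C(X, ℝ) → ℝ} (hν : IsIdemMeasure ν) (f₀ : C(X × Y, ℝ)) :
    sFloor (X := X) (Y := Y) ν f₀ ≤ ‖f₀‖ := by
  have h := le_norm hν (ysupCM (X := X) (Y := Y) f₀)
  have h2 : ‖ysupCM (X := X) (Y := Y) f₀‖ ≤ ‖f₀‖ := by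
    refine ContinuousMap.norm_le _ (norm_nonneg f₀) |>.mpr fun x => ?_
    rw [Real.norm_eq_abs, abs_le]
    constructor
    · obtain ⟨y⟩ := (inferInstance : Nonempty Y)
      have h3 : -‖f₀‖ ≤ f₀ (x, y) := by
        have := f₀.norm_coe_le_norm (x, y)
        rw [Real.norm_eq_abs] at this
        have := abs_le.mp this
        linarith [this.1]
      have h4 := le_ysup f₀ (x, y)
      exact h3.trans h4
    · exact ysup_le_norm f₀ x
  unfold sFloor
  linarith
end Ysup

/-! ### Finset sup' helpers -/
section FinsetSup
variable {α : Type*}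

theorem finset_sup'_const_add (s : Finset α) (hs : s.Nonempty) (v : α → ℝ) (c : ℝ) :
    s.sup' hs (fun a => c + v a) = c + s.sup' hs v := by
  induction hs using Finset.Nonempty.cons_induction with
  | singleton a => simp
  | cons a s ha hs ih =>
      rw [Finset.sup'_cons hs, Finset.sup'_cons hs, ih, max_add_add_left]

theorem finset_sup'_max (s : Finset α) (hs : s.Nonempty) (u v : α → ℝ) :
    s.sup' hs (fun a => max (u a) (v a)) = max (s.sup' hs u) (s.sup' hs v) := by
  induction hs using Finset.Nonempty.cons_induction with
  | singleton a => simp only [Finset.sup'_singleton]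
  | cons a s ha hs ih =>
      rw [Finset.sup'_cons hs, Finset.sup'_cons hs, Finset.sup'_cons hs, ih, max_max_max_comm]

theorem continuous_finset_sup' {Z : Type*} [TopologicalSpace Z] (s : Finset α)
    (hs : s.Nonempty) (v : α → Z → ℝ) (hv : ∀ a, Continuous (v a)) :
    Continuous (fun z => s.sup' hs (fun a => v a z)) := by
  induction hs using Finset.Nonempty.cons_induction with
  | singleton a => simpa using hv a
  | cons a s ha hs ih =>
      simp only [Finset.sup'_cons hs]
      exact Continuous.max (hv a) ih

end FinsetSup

/-! ### Pushforward and slices -/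
section Push
variable {X Y : Type*} [MetricSpace X] [CompactSpace X] [Nonempty X]
  [MetricSpace Y] [CompactSpace Y] [Nonempty Y]

theorem pushF_prX_isMeasure {μ : C(X × Y, ℝ) → ℝ} (hμ : IsIdemMeasure μ) :
    IsIdemMeasure (fun g : C(X, ℝ) => μ (g.comp prX)) := by
  refine ⟨fun c => ?_, fun c g => ?_, fun g g' => ?_⟩
  · show μ ((ContinuousMap.const X c).comp prX) = c
    have h : (ContinuousMap.const X c).comp (prX (Y := Y)) = ContinuousMap.const (X × Y) c := by
      ext p; rfl
    rw [h, hμ.1]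
  · show μ ((ContinuousMap.const X c + g).comp prX) = c + μ (g.comp prX)
    have h : (ContinuousMap.const X c + g).comp (prX (Y := Y))
        = ContinuousMap.const (X × Y) c + g.comp prX := by ext p; rfl
    rw [h, hμ.2.1]
  · show μ ((g ⊔ g').comp prX) = max (μ (g.comp prX)) (μ (g'.comp prX))
    have h : (g ⊔ g').comp (prX (Y := Y)) = g.comp prX ⊔ g'.comp prX := by
      ext p
      simp [ContinuousMap.sup_apply, ContinuousMap.comp_apply]
    rw [h, hμ.2.2]

/-- The map `x ↦ (x, y₀)` as a continuous map. -/
def pairCM (y₀ : Y) : C(X, X × Y) := ⟨fun x => (x, y₀), by fun_prop⟩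

theorem pairCM_apply (y₀ : Y) (x : X) : pairCM (X := X) y₀ x = (x, y₀) := rfl

theorem slice_comp_prX (g : C(X, ℝ)) (y₀ : Y) :
    (g.comp prX).comp (pairCM (X := X) y₀) = g := by ext x; rfl

theorem slice_const (c : ℝ) (y₀ : Y) :
    (ContinuousMap.const (X × Y) c).comp (pairCM (X := X) y₀) = ContinuousMap.const X c := by
  ext x; rfl

theorem slice_add_const (c : ℝ) (f₀ : C(X × Y, ℝ)) (y₀ : Y) :
    (ContinuousMap.const (X × Y) c + f₀).comp (pairCM (X := X) y₀)
      = ContinuousMap.const X c + f₀.comp (pairCM y₀) := by ext x; rfl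

theorem slice_sup (f₀ f₁ : C(X × Y, ℝ)) (y₀ : Y) :
    (f₀ ⊔ f₁).comp (pairCM (X := X) y₀)
      = f₀.comp (pairCM y₀) ⊔ f₁.comp (pairCM y₀) := by
  ext x
  simp [ContinuousMap.sup_apply, ContinuousMap.comp_apply]

end Push

/-! ### The approximate-section construction -/
section Section
variable {X Y : Type*} [MetricSpace X] [CompactSpace X] [Nonempty X]
  [MetricSpace Y] [CompactSpace Y] [Nonempty Y]

theorem exists_section (μ : C(X × Y, ℝ) → ℝ) (hμ : IsIdemMeasure μ) (N : ℕ)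
    (f : Fin N → C(X × Y, ℝ)) {ε : ℝ} (hε : 0 < ε) :
    ∃ S : (C(X, ℝ) → ℝ) → (C(X × Y, ℝ) → ℝ),
      (∀ ν, IsIdemMeasure ν → IsIdemMeasure (S ν)) ∧
      (∀ ν, IsIdemMeasure ν → ∀ g : C(X, ℝ), S ν (g.comp prX) = ν g) ∧
      Continuous S ∧
      ∃ W : Set (C(X, ℝ) → ℝ), IsOpen W ∧ (fun g : C(X, ℝ) => μ (g.comp prX)) ∈ W ∧
        ∀ ν ∈ W, ∀ i : Fin N, |S ν (f i) - μ (f i)| ≤ ε := by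
  classical
  set ν₀ : (C(X, ℝ) → ℝ) := fun g => μ (g.comp prX) with hν₀def
  have hν₀ : IsIdemMeasure ν₀ := pushF_prX_isMeasure hμ
  set ε₁ : ℝ := ε/8 with hε₁def
  have hε₁ : 0 < ε₁ := by positivity
  -- norm bound
  set C0 : ℝ := 1 + ∑ i : Fin N, ‖f i‖ with hC0def
  have hC0 : 1 ≤ C0 := by
    rw [hC0def]
    have : (0:ℝ) ≤ ∑ i : Fin N, ‖f i‖ := Finset.sum_nonneg fun i _ => norm_nonneg _
    linarith
  have hC0' : 0 ≤ C0 := by linarith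
  have hfC0 : ∀ i, ‖f i‖ ≤ C0 := by
    intro i
    rw [hC0def]
    have h1 : ‖f i‖ ≤ ∑ j : Fin N, ‖f j‖ :=
      Finset.single_le_sum (fun j _ => norm_nonneg (f j)) (Finset.mem_univ i)
    linarith
  have hpt : ∀ i (q : X × Y), |f i q| ≤ C0 := fun i q => by
    have := (f i).norm_coe_le_norm q
    rw [Real.norm_eq_abs] at this
    exact this.trans (hfC0 i)
  -- uniform modulus
  obtain ⟨Δ, hΔpos, hmod⟩ : ∃ Δ > 0, ∀ i (x x' : X) (y : Y), dist x x' ≤ Δ →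
      |f i (x, y) - f i (x', y)| ≤ ε₁ := by
    have hud : ∀ i : Fin N, ∃ δ > 0, ∀ (p q : X × Y), dist p q < δ → |f i p - f i q| < ε₁ := by
      intro i
      have huc : UniformContinuous (f i) :=
        CompactSpace.uniformContinuous_of_continuous (f i).continuous
      rw [Metric.uniformContinuous_iff] at huc
      obtain ⟨δ, hδ, h⟩ := huc ε₁ hε₁
      exact ⟨δ, hδ, fun p q hpq => by have := h hpq; rwa [Real.dist_eq] at this⟩
    choose δ hδpos hδ using hud
    rcases Nat.eq_zero_or_pos N with h0 | hposN
    · refine ⟨1, one_pos, fun i => ?_⟩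
      exact absurd i.2 (by omega)
    · have hne : (Finset.univ : Finset (Fin N)).Nonempty := ⟨⟨0, hposN⟩, Finset.mem_univ _⟩
      refine ⟨(Finset.univ.inf' hne δ)/2, ?_, ?_⟩
      · have : 0 < Finset.univ.inf' hne δ := by
          rw [Finset.lt_inf'_iff]
          exact fun i _ => hδpos i
        linarith
      · intro i x x' y hd
        have h1 : Finset.univ.inf' hne δ ≤ δ i := Finset.inf'_le δ (Finset.mem_univ i)
        have h2 : 0 < δ i := hδpos i
        have h3 : dist ((x, y) : X × Y) (x', y) < δ i := by
          rw [dist_pair_fst]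
          calc dist x x' ≤ (Finset.univ.inf' hne δ)/2 := hd
          _ < δ i := by linarith
        exact (hδ i _ _ h3).le
  -- atoms
  obtain ⟨p, hAT⟩ : ∃ p : Fin N → X × Y, ∀ i, ∀ F : C(X × Y, ℝ),
      μ (f i) - ε₁ - f i (p i) + F (p i) ≤ μ F := by
    have := fun i : Fin N => exists_point hμ (f i) hε₁
    choose p hp using this
    exact ⟨p, hp⟩
  set d : Fin N → ℝ := fun i => μ (f i) - ε₁ - f i (p i) with hddef
  set mset : Fin N → Set ℝ := fun i => Set.range (fun g : C(X, ℝ) => ν₀ g - g (p i).1)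
    with hmsetdef
  have hmlb : ∀ i (g : C(X, ℝ)), d i ≤ ν₀ g - g (p i).1 := by
    intro i g
    have h1 := hAT i (g.comp prX)
    have h2 : (g.comp prX) (p i) = g (p i).1 := rfl
    rw [h2] at h1
    simp only [hν₀def, hddef]
    linarith
  have hbddB : ∀ i, BddBelow (mset i) := fun i =>
    ⟨d i, by rintro _ ⟨g, rfl⟩; exact hmlb i g⟩
  have hmne : ∀ i, (mset i).Nonempty := fun i => ⟨_, ⟨0, rfl⟩⟩
  set m : Fin N → ℝ := fun i => sInf (mset i) with hmdef
  have hdm : ∀ i, d i ≤ m i := fun i => le_csInf (hmne i) (by rintro _ ⟨g, rfl⟩; exact hmlb i g)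
  have hmle : ∀ i (g : C(X, ℝ)), m i ≤ ν₀ g - g (p i).1 := fun i g =>
    csInf_le (hbddB i) ⟨g, rfl⟩
  -- choice of k, per-atom regularity
  have hki : ∀ i : Fin N, ∃ ki : ℝ, ∀ k ≥ ki, 0 ≤ k → nuk μ k (p i).1 ≤ m i + ε₁ := by
    intro i
    obtain ⟨r, hrmem, hrlt⟩ : ∃ r ∈ mset i, r < m i + ε₁/2 :=
      Real.lt_sInf_add_pos (hmne i) (by positivity)
    obtain ⟨g, rfl⟩ := hrmem
    set g' : C(X, ℝ) := g + ContinuousMap.const X (-(g (p i).1)) with hg'def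
    have hg'val : ν₀ g' = ν₀ g - g (p i).1 := by
      rw [hg'def, shift' hν₀]; ring
    have hg'pt : g' (p i).1 = 0 := by
      simp [hg'def, ContinuousMap.add_apply, ContinuousMap.const_apply]
    obtain ⟨δ', hδ'pos, hδ'⟩ : ∃ δ' > 0, ∀ u, dist u (p i).1 < δ' → |g' u - g' (p i).1| < ε₁/2 := by
      have := Metric.continuousAt_iff.mp (g'.continuous.continuousAt (x := (p i).1))
      obtain ⟨δ', hδ', h⟩ := this (ε₁/2) (by positivity)
      exact ⟨δ', hδ', fun u hu => by have := h hu; rwa [Real.dist_eq] at this⟩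
    refine ⟨2*(‖g'‖+1)/δ', fun k hk hk0 => ?_⟩
    have hle : gk k (p i).1 ≤ g' + ContinuousMap.const X (ε₁/2) := by
      refine ContinuousMap.le_def.mpr fun u => ?_
      rw [gk_apply]
      simp only [ContinuousMap.add_apply, ContinuousMap.const_apply]
      rcases lt_or_ge (dist u (p i).1) δ' with hu | hu
      · have h1 := hδ' u hu
        rw [hg'pt, sub_zero] at h1
        have h2 := abs_le.mp h1.le
        have h3 : 0 ≤ k/2 * dist u (p i).1 := mul_nonneg (by linarith) dist_nonneg
        linarith
      · have h1 : (2*(‖g'‖+1)/δ')/2 * δ' ≤ k/2 * dist u (p i).1 := by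
          apply mul_le_mul (by linarith) hu (le_of_lt hδ'pos) (by linarith)
        have h2 : (2*(‖g'‖+1)/δ')/2 * δ' = ‖g'‖+1 := by field_simp
        have h3 : -‖g'‖ ≤ g' u := by
          have := g'.norm_coe_le_norm u
          rw [Real.norm_eq_abs] at this
          linarith [abs_le.mp this |>.1]
        linarith
    have h4 : nuk μ k (p i).1 = ν₀ (gk k (p i).1) := rfl
    have h5 := mono hν₀ hle
    rw [shift' hν₀] at h5
    rw [h4]
    have h6 : ν₀ g' < m i + ε₁/2 := by
      rw [hg'val]
      simpa using hrlt
    linarith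
  choose ki hkispec using hki
  obtain ⟨k, hk0, hkb, hkc⟩ : ∃ k : ℝ, 0 ≤ k ∧ 2*C0+1 ≤ k/2*Δ ∧
      ∀ i, nuk μ k (p i).1 ≤ m i + ε₁ := by
    obtain ⟨K0, hK0⟩ : ∃ K0 : ℝ, ∀ i, ki i ≤ K0 := by
      rcases Nat.eq_zero_or_pos N with h0 | hposN
      · exact ⟨0, fun i => absurd i.2 (by omega)⟩
      · have hne : (Finset.univ : Finset (Fin N)).Nonempty := ⟨⟨0, hposN⟩, Finset.mem_univ _⟩
        exact ⟨Finset.univ.sup' hne ki, fun i => Finset.le_sup' ki (Finset.mem_univ i)⟩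
    set k := max (max K0 0) (2*(2*C0+1)/Δ) with hkdef
    have hk0 : 0 ≤ k := le_trans (le_max_right _ _) (le_max_left _ _)
    have hkK : ∀ i, ki i ≤ k := fun i =>
      le_trans (le_trans (hK0 i) (le_max_left K0 0)) (le_max_left _ _)
    refine ⟨k, hk0, ?_, fun i => hkispec i k (hkK i) hk0⟩
    · have h1 : 2*(2*C0+1)/Δ ≤ k := le_max_right _ _
      have h2 : 2*(2*C0+1)/Δ * Δ = 2*(2*C0+1) := div_mul_cancel₀ _ (ne_of_gt hΔpos)
      have h3 : 2*(2*C0+1)/Δ * Δ ≤ k * Δ := mul_le_mul_of_nonneg_right h1 hΔpos.le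
      linarith
  -- the bump functions
  set W0 : ℝ := 2*C0+1 with hW0def
  have hW0' : 0 ≤ W0 := by rw [hW0def]; linarith
  set cc : Fin N → ℝ := fun i => d i - m i with hccdef
  have hcc0 : ∀ i, cc i ≤ 0 := fun i => by simp only [hccdef]; linarith [hdm i]
  set chi : Fin N → C(X, ℝ) := fun i =>
    ⟨fun x => cc i - k * dist x (p i).1, by fun_prop⟩ with hchidef
  have hchi_apply : ∀ i x, chi i x = cc i - k * dist x (p i).1 := fun i x => rfl
  have hchi_le : ∀ i x, chi i x ≤ 0 := fun i x => by
    rw [hchi_apply]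
    have := mul_nonneg hk0 (dist_nonneg (x := x) (y := (p i).1))
    linarith [hcc0 i]
  set TF : Option (Fin N) → C(X × Y, ℝ) → C(X, ℝ) := fun o f₀ =>
    Option.elim o (ThetaCM hμ hk0 hW0' f₀) (fun i => chi i + f₀.comp (pairCM (p i).2))
    with hTFdef
  have hTFnone : ∀ f₀, TF none f₀ = ThetaCM hμ hk0 hW0' f₀ := fun f₀ => rfl
  have hTFsome : ∀ i f₀, TF (some i) f₀ = chi i + f₀.comp (pairCM (p i).2) := fun i f₀ => rfl
  set S : (C(X, ℝ) → ℝ) → (C(X × Y, ℝ) → ℝ) := fun ν f₀ =>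
    (Finset.univ : Finset (Option (Fin N))).sup' Finset.univ_nonempty (fun o => ν (TF o f₀))
    with hSdef
  have hSapp : ∀ ν f₀, S ν f₀ =
      (Finset.univ : Finset (Option (Fin N))).sup' Finset.univ_nonempty
        (fun o => ν (TF o f₀)) := fun ν f₀ => rfl
  -- ν₀-estimates
  have hUnone : ∀ i, ν₀ (TF none (f i)) ≤ μ (f i) + 2*ε₁ := by
    intro i
    obtain ⟨xs, hxs⟩ := exists_point hν₀ (TF none (f i)) hε₁
    have h1 := hxs (gk k xs)
    rw [gk_self] at h1
    have h2 : ν₀ (gk k xs) = nuk μ k xs := rfl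
    have h3 : (TF none (f i)) xs = Theta μ k W0 (f i) xs := rfl
    have h4 := theta_safety hμ hk0 hW0def hC0' hε₁ hΔpos (f i) (hfC0 i) (hmod i) hkb xs
    rw [h2, h3] at h1
    linarith
  have hUsome : ∀ j i, ν₀ (TF (some j) (f i)) ≤ μ (f i) + 4*ε₁ := by
    intro j i
    obtain ⟨xs, hxs⟩ := exists_point hν₀ (TF (some j) (f i)) hε₁
    have h1 := hxs (gk k (p j).1)
    have h2 : ν₀ (gk k (p j).1) = nuk μ k (p j).1 := rfl
    have h3 : (TF (some j) (f i)) xs = cc j - k * dist xs (p j).1 + f i (xs, (p j).2) := by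
      rw [hTFsome]
      simp only [ContinuousMap.add_apply, ContinuousMap.comp_apply]
      rw [hchi_apply]
      rfl
    have h4 := hkc j
    have h5 : d j + f i (p j) ≤ μ (f i) := by
      have := hAT j (f i)
      simp only [hddef]
      linarith
    have hbr : f i (xs, (p j).2) - f i ((p j).1, (p j).2) - k/2 * dist xs (p j).1 ≤ ε₁ := by
      rcases le_or_gt (dist xs (p j).1) Δ with hdl | hdl
      · have hx := abs_le.mp (hmod i xs (p j).1 (p j).2 hdl)
        have hnn : 0 ≤ k/2 * dist xs (p j).1 := mul_nonneg (by linarith) dist_nonneg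
        linarith [hx.2]
      · have h6 := abs_le.mp (hpt i (xs, (p j).2))
        have h7 := abs_le.mp (hpt i ((p j).1, (p j).2))
        have h8 : k/2*Δ ≤ k/2*dist xs (p j).1 :=
          mul_le_mul_of_nonneg_left hdl.le (by linarith)
        linarith [h6.2, h7.1]
    have h9 : gk k (p j).1 xs = -(k/2 * dist xs (p j).1) := rfl
    have hpj : f i ((p j).1, (p j).2) = f i (p j) := rfl
    have hhalf : k/2 * dist xs (p j).1 + k/2 * dist xs (p j).1 = k * dist xs (p j).1 := by
      ring
    have hcj : cc j = d j - m j := rfl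
    rw [h2, h9] at h1
    rw [h3] at h1
    linarith
  have hLow : ∀ i, μ (f i) - ε₁ ≤ ν₀ (TF (some i) (f i)) := by
    intro i
    have h1 := hmle i (TF (some i) (f i))
    have h2 : (TF (some i) (f i)) (p i).1 = cc i + f i ((p i).1, (p i).2) := by
      rw [hTFsome]
      simp only [ContinuousMap.add_apply, ContinuousMap.comp_apply]
      rw [hchi_apply, dist_self]
      have hpair : (pairCM (p i).2) ((p i).1) = ((p i).1, (p i).2) := rfl
      rw [hpair]
      ring
    have hpj : f i ((p i).1, (p i).2) = f i (p i) := rfl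
    have hci : cc i = d i - m i := rfl
    have hdi : d i = μ (f i) - ε₁ - f i (p i) := rfl
    rw [h2, hpj, hci, hdi] at h1
    linarith
  refine ⟨S, ?_, ?_, ?_, ?_⟩
  · -- measure axioms
    intro ν hν
    refine ⟨fun c0 => ?_, fun c0 f₀ => ?_, fun f₀ f₁ => ?_⟩
    · -- constants
      have hnone : ν (TF none (ContinuousMap.const (X × Y) c0)) = c0 := by
        have h1 : (ContinuousMap.const (X × Y) c0) = (ContinuousMap.const X c0).comp prX := by
          ext q; rfl
        have h2 : TF none (ContinuousMap.const (X × Y) c0) = ContinuousMap.const X c0 := by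
          ext x
          show Theta μ k W0 (ContinuousMap.const (X × Y) c0) x = c0
          rw [h1]
          exact theta_comp_prX hμ hW0' _ x
        rw [h2, hν.1]
      have hsome : ∀ i, ν (TF (some i) (ContinuousMap.const (X × Y) c0)) ≤ c0 := by
        intro i
        have h2 : TF (some i) (ContinuousMap.const (X × Y) c0)
            = chi i + ContinuousMap.const X c0 := by
          rw [hTFsome, slice_const]
        rw [h2, shift' hν]
        have h3 : ν (chi i) ≤ 0 := by
          have h4 : chi i ≤ ContinuousMap.const X 0 :=
            ContinuousMap.le_def.mpr fun x => hchi_le i x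
          have := mono hν h4
          rwa [hν.1] at this
        linarith
      rw [hSapp]
      apply le_antisymm
      · refine Finset.sup'_le _ _ fun o _ => ?_
        cases o with
        | none => rw [hnone]
        | some i => exact hsome i
      · have h5 := Finset.le_sup' (fun o => ν (TF o (ContinuousMap.const (X × Y) c0)))
          (Finset.mem_univ (none : Option (Fin N)))
        rw [hnone] at h5
        exact h5
    · -- shift
      have ht : ∀ o, TF o (ContinuousMap.const (X × Y) c0 + f₀)
          = ContinuousMap.const X c0 + TF o f₀ := by
        intro o
        cases o with
        | none =>
          ext x
          show Theta μ k W0 (ContinuousMap.const (X × Y) c0 + f₀) x = _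
          rw [theta_add_const hμ hW0']
          rfl
        | some i =>
          rw [hTFsome, hTFsome, slice_add_const]
          ext x
          simp only [ContinuousMap.add_apply, ContinuousMap.const_apply]
          ring
      rw [hSapp, hSapp]
      have hcongr : ∀ o : Option (Fin N), ν (TF o (ContinuousMap.const (X × Y) c0 + f₀))
          = c0 + ν (TF o f₀) := by
        intro o
        rw [ht o, hν.2.1]
      calc (Finset.univ : Finset (Option (Fin N))).sup' Finset.univ_nonempty
            (fun o => ν (TF o (ContinuousMap.const (X × Y) c0 + f₀)))
          = (Finset.univ : Finset (Option (Fin N))).sup' Finset.univ_nonempty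
            (fun o => c0 + ν (TF o f₀)) := by
            exact Finset.sup'_congr _ rfl (fun o _ => hcongr o)
        _ = c0 + _ := finset_sup'_const_add _ _ _ _
    · -- sup axiom
      have ht : ∀ o, TF o (f₀ ⊔ f₁) = TF o f₀ ⊔ TF o f₁ := by
        intro o
        cases o with
        | none =>
          ext x
          show Theta μ k W0 (f₀ ⊔ f₁) x = _
          rw [theta_sup hμ hW0']
          rfl
        | some i =>
          rw [hTFsome, hTFsome, hTFsome, slice_sup]
          ext x
          simp only [ContinuousMap.add_apply, ContinuousMap.sup_apply]
          exact (max_add_add_left _ _ _).symm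
      rw [hSapp, hSapp, hSapp]
      have hcongr : ∀ o : Option (Fin N), ν (TF o (f₀ ⊔ f₁))
          = max (ν (TF o f₀)) (ν (TF o f₁)) := by
        intro o
        rw [ht o, hν.2.2]
      calc (Finset.univ : Finset (Option (Fin N))).sup' Finset.univ_nonempty
            (fun o => ν (TF o (f₀ ⊔ f₁)))
          = (Finset.univ : Finset (Option (Fin N))).sup' Finset.univ_nonempty
            (fun o => max (ν (TF o f₀)) (ν (TF o f₁))) := by
            exact Finset.sup'_congr _ rfl (fun o _ => hcongr o)
        _ = _ := finset_sup'_max _ _ _ _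
  · -- marginal
    intro ν hν g
    have hnone : ν (TF none (g.comp prX)) = ν g := by
      have h2 : TF none (g.comp prX) = g := by
        ext x
        exact theta_comp_prX hμ hW0' g x
      rw [h2]
    have hsome : ∀ i, ν (TF (some i) (g.comp prX)) ≤ ν g := by
      intro i
      have h2 : TF (some i) (g.comp prX) = chi i + g := by
        rw [hTFsome, slice_comp_prX]
      rw [h2]
      refine mono hν (ContinuousMap.le_def.mpr fun x => ?_)
      simp only [ContinuousMap.add_apply]
      linarith [hchi_le i x]
    rw [hSapp]
    apply le_antisymm
    · refine Finset.sup'_le _ _ fun o _ => ?_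
      cases o with
      | none => rw [hnone]
      | some i => exact hsome i
    · have h5 := Finset.le_sup' (fun o => ν (TF o (g.comp prX)))
        (Finset.mem_univ (none : Option (Fin N)))
      rw [hnone] at h5
      exact h5
  · -- continuity
    refine continuous_pi fun f₀ => ?_
    exact continuous_finset_sup' _ _ (fun o (ν : C(X, ℝ) → ℝ) => ν (TF o f₀))
      (fun o => continuous_apply _)
  · -- estimates
    refine ⟨{ν | ∀ q : Option (Fin N) × Fin N,
      |ν (TF q.1 (f q.2)) - ν₀ (TF q.1 (f q.2))| < ε₁}, ?_, ?_, ?_⟩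
    · have heq : {ν : C(X, ℝ) → ℝ | ∀ q : Option (Fin N) × Fin N,
          |ν (TF q.1 (f q.2)) - ν₀ (TF q.1 (f q.2))| < ε₁}
          = ⋂ q : Option (Fin N) × Fin N,
            (fun ν : C(X, ℝ) → ℝ => ν (TF q.1 (f q.2))) ⁻¹'
              (Metric.ball (ν₀ (TF q.1 (f q.2))) ε₁) := by
        ext ν
        simp only [Set.mem_setOf_eq, Set.mem_iInter, Set.mem_preimage, Metric.mem_ball,
          Real.dist_eq]
      rw [heq]
      exact isOpen_iInter_of_finite fun q =>
        (continuous_apply _).isOpen_preimage _ Metric.isOpen_ball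
    · intro q
      simpa using hε₁
    · intro ν hνW i
      have hup : S ν (f i) ≤ μ (f i) + 5*ε₁ := by
        rw [hSapp]
        refine Finset.sup'_le _ _ fun o _ => ?_
        have hclose := (hνW (o, i))
        have hc2 := (abs_le.mp hclose.le).2
        cases o with
        | none =>
          have := hUnone i
          linarith
        | some j =>
          have := hUsome j i
          linarith
      have hlow : μ (f i) - 2*ε₁ ≤ S ν (f i) := by
        rw [hSapp]
        have hclose := hνW (some i, i)
        have hc1 := (abs_le.mp hclose.le).1
        have h1 := Finset.le_sup' (fun o => ν (TF o (f i)))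
          (Finset.mem_univ (some i : Option (Fin N)))
        have h2 := hLow i
        linarith
      rw [abs_le]
      constructor
      · have : 0 < ε₁ := hε₁
        have h8 : ε₁ = ε/8 := rfl
        linarith
      · have h8 : ε₁ = ε/8 := rfl
        linarith

end Section

/-! ### Max-plus combination along a partition of unity -/
section Combine
open Function
variable {X Y Z ι : Type*} [MetricSpace X] [CompactSpace X] [Nonempty X]
  [MetricSpace Y] [CompactSpace Y] [Nonempty Y]
  [TopologicalSpace Z] [Nonempty ι]

variable (u : PartitionOfUnity ι Z Set.univ)

/-- The max of the partition functions. -/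
noncomputable def sigmaP (z : Z) : ℝ := ⨆ i, u i z

theorem sigmaP_bdd (z : Z) : BddAbove (Set.range fun i => u i z) :=
  bddAbove_of_le fun i => u.le_one i z

theorem sigmaP_attain (z : Z) : ∃ i0, 0 < u i0 z ∧ u i0 z = sigmaP u z := by
  obtain ⟨i1, hi1⟩ := u.exists_pos (Set.mem_univ z)
  have hTfin : {i | u i z ≠ 0}.Finite := by
    have := u.locallyFinite.point_finite z
    simpa [Function.mem_support] using this
  set T := hTfin.toFinset with hTdef
  have hi1T : i1 ∈ T := hTfin.mem_toFinset.mpr (ne_of_gt hi1)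
  have hTne : T.Nonempty := ⟨i1, hi1T⟩
  have hσeq : sigmaP u z = T.sup' hTne (fun i => u i z) := by
    apply le_antisymm
    · refine ciSup_le fun i => ?_
      by_cases hi : u i z = 0
      · rw [hi]
        have := Finset.le_sup' (fun i => u i z) hi1T
        linarith
      · exact Finset.le_sup' (fun i => u i z) (hTfin.mem_toFinset.mpr hi)
    · exact Finset.sup'_le _ _ fun i _ => le_ciSup (sigmaP_bdd u z) i
  obtain ⟨i0, hi0T, hi0⟩ := Finset.exists_mem_eq_sup' hTne (fun i => u i z)
  refine ⟨i0, ?_, by rw [hσeq, hi0]⟩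
  have hne : u i0 z ≠ 0 := hTfin.mem_toFinset.mp hi0T
  exact lt_of_le_of_ne (u.nonneg i0 z) (Ne.symm hne)

theorem sigmaP_pos (z : Z) : 0 < sigmaP u z := by
  obtain ⟨i0, hi0, heq⟩ := sigmaP_attain u z
  rw [← heq]; exact hi0

theorem le_sigmaP (i : ι) (z : Z) : u i z ≤ sigmaP u z := le_ciSup (sigmaP_bdd u z) i

theorem sigmaP_continuous : Continuous (sigmaP u) := by
  rw [continuous_iff_continuousAt]
  intro z₀
  obtain ⟨N, hN, hfin⟩ := u.locallyFinite z₀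
  obtain ⟨i1, hi1⟩ := u.exists_pos (Set.mem_univ z₀)
  set T := hfin.toFinset with hTdef
  have hi1T : i1 ∈ T := by
    rw [Set.Finite.mem_toFinset]
    refine ⟨z₀, ⟨Function.mem_support.mpr (ne_of_gt hi1), mem_of_mem_nhds hN⟩⟩
  have hTne : T.Nonempty := ⟨i1, hi1T⟩
  have hEq : ∀ z ∈ N, T.sup' hTne (fun i => u i z) = sigmaP u z := by
    intro z hz
    apply le_antisymm
    · exact Finset.sup'_le _ _ fun i _ => le_ciSup (sigmaP_bdd u z) i
    · refine ciSup_le fun i => ?_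
      by_cases hi : u i z = 0
      · rw [hi]
        obtain ⟨i2, hi2⟩ := u.exists_pos (Set.mem_univ z)
        have hi2T : i2 ∈ T := by
          rw [Set.Finite.mem_toFinset]
          exact ⟨z, ⟨Function.mem_support.mpr (ne_of_gt hi2), hz⟩⟩
        have := Finset.le_sup' (fun i => u i z) hi2T
        linarith
      · refine Finset.le_sup' (fun i => u i z) ?_
        rw [Set.Finite.mem_toFinset]
        exact ⟨z, ⟨Function.mem_support.mpr hi, hz⟩⟩
  have hc : ContinuousAt (fun z => T.sup' hTne (fun i => u i z)) z₀ :=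
    (continuous_finset_sup' T hTne (fun i z => u i z) (fun i => (u i).continuous)).continuousAt
  exact hc.congr (Filter.eventuallyEq_of_mem hN hEq)

variable (R : ℝ)

/-- The max-plus coefficients of a partition of unity. -/
noncomputable def tauP (i : ι) (z : Z) : ℝ := R * (u i z / sigmaP u z) - R

theorem tauP_nonpos (hR : 0 ≤ R) (i : ι) (z : Z) : tauP u R i z ≤ 0 := by
  unfold tauP
  have h1 : u i z / sigmaP u z ≤ 1 :=
    (div_le_one (sigmaP_pos u z)).mpr (le_sigmaP u i z)
  nlinarith

theorem neg_R_le_tauP (hR : 0 ≤ R) (i : ι) (z : Z) : -R ≤ tauP u R i z := by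
  unfold tauP
  have h1 : 0 ≤ u i z / sigmaP u z := div_nonneg (u.nonneg i z) (sigmaP_pos u z).le
  nlinarith

theorem tauP_eq_zero {i : ι} {z : Z} (h : u i z = sigmaP u z) : tauP u R i z = 0 := by
  unfold tauP
  rw [h, div_self (ne_of_gt (sigmaP_pos u z))]
  ring

theorem tauP_eq_neg_R {i : ι} {z : Z} (h : u i z = 0) : tauP u R i z = -R := by
  unfold tauP
  rw [h, zero_div]
  ring

theorem tauP_continuous (i : ι) : Continuous (tauP u R i) := by
  unfold tauP
  exact (continuous_const.mul ((u i).continuous.div (sigmaP_continuous u)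
    (fun z => ne_of_gt (sigmaP_pos u z)))).sub continuous_const

theorem ciSup_tauP (hR : 0 ≤ R) (z : Z) : (⨆ i, tauP u R i z) = 0 := by
  apply le_antisymm
  · exact ciSup_le fun i => tauP_nonpos u R hR i z
  · obtain ⟨i0, _, heq⟩ := sigmaP_attain u z
    have h1 : tauP u R i0 z = 0 := tauP_eq_zero u R heq
    have h2 := le_ciSup (bddAbove_of_le (fun i => tauP_nonpos u R hR i z)) i0
    linarith

variable (M : ι → Z → C(X × Y, ℝ) → ℝ) (ψv : Z → C(X, ℝ) → ℝ)

/-- The max-plus combination of a family of liftings along a partition of unity. -/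
noncomputable def comb (z : Z) (f₀ : C(X × Y, ℝ)) : ℝ :=
  max (⨆ i, (tauP u R i z + M i z f₀)) (-R + sFloor (ψv z) f₀)

variable {M ψv}
variable (hψm : ∀ z, IsIdemMeasure (ψv z))
  (hM : ∀ i z, IsIdemMeasure (M i z))
  (hMm : ∀ i z (g : C(X, ℝ)), M i z (g.comp prX) = ψv z g)

section CombBasic
include hψm hM hMm

theorem M_le_sFloor (i : ι) (z : Z) (f₀ : C(X × Y, ℝ)) :
    M i z f₀ ≤ sFloor (ψv z) f₀ := le_sFloor (hM i z) (hMm i z) f₀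

theorem comb_bdd (hR : 0 ≤ R) (z : Z) (f₀ : C(X × Y, ℝ)) :
    BddAbove (Set.range fun i => tauP u R i z + M i z f₀) := by
  refine bddAbove_of_le (B := sFloor (ψv z) f₀) fun i => ?_
  have h1 := tauP_nonpos u R hR i z
  have h2 := M_le_sFloor hψm hM hMm i z f₀
  linarith

theorem comb_isMeasure (hR : 0 ≤ R) (z : Z) : IsIdemMeasure (comb u R M ψv z) := by
  refine ⟨fun c => ?_, fun c f₀ => ?_, fun f₀ f₁ => ?_⟩
  · unfold comb
    have h1 : ∀ i, M i z (ContinuousMap.const (X × Y) c) = c := fun i => (hM i z).1 c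
    simp_rw [h1]
    rw [show (fun i => tauP u R i z + c) = (fun i => c + tauP u R i z) by
      funext i; ring]
    rw [ciSup_add_const (bddAbove_of_le (fun i => tauP_nonpos u R hR i z)) c,
      ciSup_tauP u R hR z, (sFloor_isMeasure (hψm z)).1 c]
    rw [add_zero]
    exact max_eq_left (by linarith)
  · unfold comb
    have h1 : ∀ i, M i z (ContinuousMap.const (X × Y) c + f₀) = c + M i z f₀ :=
      fun i => (hM i z).2.1 c f₀
    simp_rw [h1]
    rw [(sFloor_isMeasure (hψm z)).2.1 c f₀]
    rw [show (fun i => tauP u R i z + (c + M i z f₀))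
      = (fun i => c + (tauP u R i z + M i z f₀)) by funext i; ring]
    rw [ciSup_add_const (comb_bdd u R hψm hM hMm hR z f₀) c]
    rw [show -R + (c + sFloor (ψv z) f₀) = c + (-R + sFloor (ψv z) f₀) by ring]
    exact max_add_add_left _ _ _
  · unfold comb
    have h1 : ∀ i, M i z (f₀ ⊔ f₁) = max (M i z f₀) (M i z f₁) :=
      fun i => (hM i z).2.2 f₀ f₁
    simp_rw [h1]
    rw [(sFloor_isMeasure (hψm z)).2.2 f₀ f₁]
    rw [show (fun i => tauP u R i z + max (M i z f₀) (M i z f₁))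
      = (fun i => max (tauP u R i z + M i z f₀) (tauP u R i z + M i z f₁)) by
        funext i; exact (max_add_add_left _ _ _).symm]
    rw [ciSup_max (comb_bdd u R hψm hM hMm hR z f₀) (comb_bdd u R hψm hM hMm hR z f₁)]
    rw [show -R + max (sFloor (ψv z) f₀) (sFloor (ψv z) f₁)
      = max (-R + sFloor (ψv z) f₀) (-R + sFloor (ψv z) f₁) from (max_add_add_left _ _ _).symm]
    exact max_max_max_comm _ _ _ _

theorem comb_marginal (hR : 0 ≤ R) (z : Z) (g : C(X, ℝ)) :
    comb u R M ψv z (g.comp prX) = ψv z g := by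
  unfold comb
  have h1 : ∀ i, M i z (g.comp prX) = ψv z g := fun i => hMm i z g
  simp_rw [h1]
  rw [show (fun i => tauP u R i z + ψv z g) = (fun i => ψv z g + tauP u R i z) by
    funext i; ring]
  rw [ciSup_add_const (bddAbove_of_le (fun i => tauP_nonpos u R hR i z)) _,
    ciSup_tauP u R hR z, sFloor_marginal, add_zero]
  exact max_eq_left (by linarith)

theorem comb_le (hR : 0 ≤ R) (z : Z) (f₀ : C(X × Y, ℝ)) {B : ℝ}
    (h1 : ∀ i, 0 < u i z → M i z f₀ ≤ B) (h2 : -R + sFloor (ψv z) f₀ ≤ B) :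
    comb u R M ψv z f₀ ≤ B := by
  unfold comb
  refine max_le (ciSup_le fun i => ?_) h2
  rcases eq_or_lt_of_le (u.nonneg i z) with hz | hz
  · have h3 := tauP_eq_neg_R u R hz.symm
    have h4 := M_le_sFloor hψm hM hMm i z f₀
    rw [h3]
    linarith
  · have h3 := tauP_nonpos u R hR i z
    have h4 := h1 i hz
    linarith

theorem comb_ge (hR : 0 ≤ R) (z : Z) (f₀ : C(X × Y, ℝ)) :
    ∃ i, 0 < u i z ∧ M i z f₀ ≤ comb u R M ψv z f₀ := by
  obtain ⟨i0, hpos, heq⟩ := sigmaP_attain u z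
  refine ⟨i0, hpos, ?_⟩
  have h1 : tauP u R i0 z = 0 := tauP_eq_zero u R heq
  have h2 := le_ciSup (comb_bdd u R hψm hM hMm hR z f₀) i0
  rw [h1] at h2
  unfold comb
  exact (by linarith : M i0 z f₀ ≤ ⨆ i, (tauP u R i z + M i z f₀)).trans (le_max_left _ _)

theorem comb_continuous (hR : 0 ≤ R)
    (hMc : ∀ i f₀, Continuous fun z => M i z f₀)
    (hψc : ∀ g, Continuous fun z => ψv z g) (f₀ : C(X × Y, ℝ)) :
    Continuous fun z => comb u R M ψv z f₀ := by
  rw [continuous_iff_continuousAt]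
  intro z₀
  obtain ⟨N, hN, hfin⟩ := u.locallyFinite z₀
  obtain ⟨i1, hi1⟩ := u.exists_pos (Set.mem_univ z₀)
  set T := hfin.toFinset with hTdef
  have hi1T : i1 ∈ T := by
    rw [Set.Finite.mem_toFinset]
    exact ⟨z₀, ⟨Function.mem_support.mpr (ne_of_gt hi1), mem_of_mem_nhds hN⟩⟩
  have hTne : T.Nonempty := ⟨i1, hi1T⟩
  have hEq : ∀ z ∈ N,
      max (T.sup' hTne (fun i => tauP u R i z + M i z f₀)) (-R + sFloor (ψv z) f₀)
        = comb u R M ψv z f₀ := by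
    intro z hz
    apply le_antisymm
    · refine max_le (Finset.sup'_le _ _ fun i _ => ?_) (le_max_right _ _)
      exact le_trans (le_ciSup (comb_bdd u R hψm hM hMm hR z f₀) i) (le_max_left _ _)
    · unfold comb
      refine max_le (ciSup_le fun i => ?_) (le_max_right _ _)
      by_cases hi : u i z = 0
      · have h3 := tauP_eq_neg_R u R hi
        have h4 := M_le_sFloor hψm hM hMm i z f₀
        rw [h3]
        exact le_trans (by linarith) (le_max_right _ _)
      · have hiT : i ∈ T := by
          rw [Set.Finite.mem_toFinset]
          exact ⟨z, ⟨Function.mem_support.mpr hi, hz⟩⟩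
        exact le_trans (Finset.le_sup' (fun i => tauP u R i z + M i z f₀) hiT)
          (le_max_left _ _)
  have hc : ContinuousAt (fun z =>
      max (T.sup' hTne (fun i => tauP u R i z + M i z f₀)) (-R + sFloor (ψv z) f₀)) z₀ := by
    apply Continuous.continuousAt
    refine Continuous.max ?_ ?_
    · exact continuous_finset_sup' T hTne (fun i z => tauP u R i z + M i z f₀)
        (fun i => (tauP_continuous u R i).add (hMc i f₀))
    · exact continuous_const.add (hψc (ysupCM f₀))
  exact hc.congr (Filter.eventuallyEq_of_mem hN hEq)

end CombBasic
end Combine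

/-! ### The improvement step -/
section Step
open Function
variable {X Y Z : Type*} [MetricSpace X] [CompactSpace X] [Nonempty X]
  [MetricSpace Y] [CompactSpace Y] [Nonempty Y]
  [TopologicalSpace Z] [ParacompactSpace Z] [T2Space Z]

theorem step_lemma (A : Set Z) (hA : IsClosed A)
    (φ : A → IdemMeasure (X × Y)) (hφ : Continuous φ)
    (ψ : Z → IdemMeasure X) (hψ : Continuous ψ)
    (hcomm : ∀ a : A, ∀ g : C(X, ℝ), (φ a).val (g.comp prX) = (ψ a.val).val g)
    (F : ℕ → C(X × Y, ℝ)) (n : ℕ)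
    (Φ : Z → C(X × Y, ℝ) → ℝ)
    (hΦmeas : ∀ z, IsIdemMeasure (Φ z))
    (hΦmarg : ∀ z (g : C(X, ℝ)), Φ z (g.comp prX) = (ψ z).val g)
    (hΦcont : ∀ f₀, Continuous fun z => Φ z f₀)
    (hΦA : ∀ a : A, ∀ m, m < n → |Φ a.val (F m) - (φ a).val (F m)| ≤ 4*(1/2)^n) :
    ∃ Φ' : Z → C(X × Y, ℝ) → ℝ,
      (∀ z, IsIdemMeasure (Φ' z)) ∧
      (∀ z (g : C(X, ℝ)), Φ' z (g.comp prX) = (ψ z).val g) ∧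
      (∀ f₀, Continuous fun z => Φ' z f₀) ∧
      (∀ a : A, ∀ m, m < n+1 → |Φ' a.val (F m) - (φ a).val (F m)| ≤ 4*(1/2)^(n+1)) ∧
      (∀ z, ∀ m, m < n → |Φ' z (F m) - Φ z (F m)| ≤ 6*(1/2)^n) := by
  classical
  have hψv : Continuous fun z => (ψ z).val := continuous_subtype_val.comp hψ
  have hψvc : ∀ g : C(X, ℝ), Continuous fun z => (ψ z).val g :=
    fun g => (continuous_apply g).comp hψv
  set εsec : ℝ := (1/2)^(n+1) with hεsecdef
  have hεsec : 0 < εsec := by positivity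
  set fvec : Fin (n+1) → C(X × Y, ℝ) := fun m => F m with hfvecdef
  -- sections through each boundary value
  have hsec := fun a : A => exists_section (φ a).val (φ a).2 (n+1) fvec hεsec
  choose Sa hSmeas hSmarg hScont W hWopen hWmem hWest using hsec
  have hWmem' : ∀ a : A, (ψ a.val).val ∈ W a := by
    intro a
    have h := hWmem a
    have heq : (fun g : C(X, ℝ) => (φ a).val (g.comp prX)) = (ψ a.val).val :=
      funext (hcomm a)
    rwa [heq] at h
  -- norm bound and leak constant
  set Cn : ℝ := 1 + ∑ m : Fin (n+1), ‖F m‖ with hCndef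
  have hCn1 : 1 ≤ Cn := by
    rw [hCndef]
    have : (0:ℝ) ≤ ∑ m : Fin (n+1), ‖F m‖ := Finset.sum_nonneg fun m _ => norm_nonneg _
    linarith
  have hFCn : ∀ m : ℕ, m < n+1 → ‖F m‖ ≤ Cn := by
    intro m hm
    rw [hCndef]
    have h1 : ‖F m‖ ≤ ∑ j : Fin (n+1), ‖F j‖ := by
      have := Finset.single_le_sum (f := fun j : Fin (n+1) => ‖F j‖)
        (fun j _ => norm_nonneg _) (Finset.mem_univ (⟨m, hm⟩ : Fin (n+1)))
      simpa using this
    linarith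
  set R : ℝ := 2*Cn + 4 with hRdef
  have hR : 0 ≤ R := by rw [hRdef]; linarith
  -- the covering
  have hV1 : ∀ a : A, ∃ V1 : Set Z, IsOpen V1 ∧ a.val ∈ V1 ∧
      ∀ b : A, b.val ∈ V1 → ∀ m : ℕ, m < n+1 →
        |(φ b).val (F m) - (φ a).val (F m)| ≤ εsec := by
    intro a
    have hO : IsOpen {b : A | ∀ m : Fin (n+1), |(φ b).val (F m) - (φ a).val (F m)| < εsec} := by
      have : {b : A | ∀ m : Fin (n+1), |(φ b).val (F m) - (φ a).val (F m)| < εsec}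
          = ⋂ m : Fin (n+1), (fun b : A => (φ b).val (F m)) ⁻¹'
            (Metric.ball ((φ a).val (F m)) εsec) := by
        ext b
        simp [Metric.mem_ball, Real.dist_eq]
      rw [this]
      refine isOpen_iInter_of_finite fun m => ?_
      exact (((continuous_apply (F m)).comp
        (continuous_subtype_val.comp hφ)).isOpen_preimage _ Metric.isOpen_ball)
    obtain ⟨V1, hV1o, hV1eq⟩ := isOpen_induced_iff.mp hO
    refine ⟨V1, hV1o, ?_, ?_⟩
    · have ha : a ∈ Subtype.val ⁻¹' V1 := by
        rw [hV1eq]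
        intro m
        simp [sub_self, abs_zero, hεsec]
      exact ha
    · intro b hb m hm
      have hbO : b ∈ {b : A | ∀ m : Fin (n+1), |(φ b).val (F m) - (φ a).val (F m)| < εsec} := by
        rw [← hV1eq]
        exact hb
      exact (hbO ⟨m, hm⟩).le
  choose V1 hV1o hV1mem hV1est using hV1
  set V2 : A → Set Z := fun a =>
    ⋂ m : Fin (n+1), {z : Z | |Φ z (F m) - Φ a.val (F m)| < εsec} with hV2def
  have hV2o : ∀ a, IsOpen (V2 a) := by
    intro a
    refine isOpen_iInter_of_finite fun m => ?_
    have : {z : Z | |Φ z (F m) - Φ a.val (F m)| < εsec}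
        = (fun z => Φ z (F m)) ⁻¹' (Metric.ball (Φ a.val (F m)) εsec) := by
      ext z
      simp [Metric.mem_ball, Real.dist_eq]
    rw [this]
    exact (hΦcont (F m)).isOpen_preimage _ Metric.isOpen_ball
  have hV2mem : ∀ a : A, a.val ∈ V2 a := by
    intro a
    refine Set.mem_iInter.mpr fun m => ?_
    simp [hεsec]
  have hV2est : ∀ a : A, ∀ z ∈ V2 a, ∀ m : ℕ, m < n+1 →
      |Φ z (F m) - Φ a.val (F m)| ≤ εsec := by
    intro a z hz m hm
    have := Set.mem_iInter.mp hz ⟨m, hm⟩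
    exact this.le
  set U : A → Set Z := fun a =>
    ((fun z => (ψ z).val) ⁻¹' (W a)) ∩ (V1 a ∩ V2 a) with hUdef
  have hUo : ∀ a, IsOpen (U a) := fun a =>
    ((hWopen a).preimage hψv).inter ((hV1o a).inter (hV2o a))
  have hUmem : ∀ a : A, a.val ∈ U a := fun a =>
    ⟨hWmem' a, ⟨hV1mem a, hV2mem a⟩⟩
  set cov : Option A → Set Z := fun o => Option.elim o Aᶜ U with hcovdef
  have hcovo : ∀ o, IsOpen (cov o) := by
    rintro (_ | a)
    · exact hA.isOpen_compl
    · exact hUo a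
  have hcovcov : Set.univ ⊆ ⋃ o, cov o := by
    intro z _
    by_cases hz : z ∈ A
    · exact Set.mem_iUnion.mpr ⟨some ⟨z, hz⟩, hUmem ⟨z, hz⟩⟩
    · exact Set.mem_iUnion.mpr ⟨none, hz⟩
  obtain ⟨u, hsub⟩ := PartitionOfUnity.exists_isSubordinate isClosed_univ cov hcovo hcovcov
  set M : Option A → Z → C(X × Y, ℝ) → ℝ := fun o z =>
    Option.elim o (Φ z) (fun a => Sa a ((ψ z).val)) with hMdef
  have hM : ∀ o z, IsIdemMeasure (M o z) := by
    rintro (_ | a) z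
    · exact hΦmeas z
    · exact hSmeas a ((ψ z).val) (ψ z).2
  have hMm : ∀ o z (g : C(X, ℝ)), M o z (g.comp prX) = (ψ z).val g := by
    rintro (_ | a) z g
    · exact hΦmarg z g
    · exact hSmarg a ((ψ z).val) (ψ z).2 g
  have hMc : ∀ o f₀, Continuous fun z => M o z f₀ := by
    rintro (_ | a) f₀
    · exact hΦcont f₀
    · exact ((continuous_apply f₀).comp (hScont a)).comp hψv
  have hψm : ∀ z, IsIdemMeasure ((ψ z).val) := fun z => (ψ z).2
  refine ⟨comb u R M (fun z => (ψ z).val), fun z => comb_isMeasure u R hψm hM hMm hR z,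
    fun z g => comb_marginal u R hψm hM hMm hR z g,
    fun f₀ => comb_continuous u R hψm hM hMm hR hMc hψvc f₀, ?_, ?_⟩
  · -- boundary estimate
    intro a m hm
    have hnoneA : u none a.val = 0 := by
      by_contra hne
      have h1 : a.val ∈ tsupport (u none) := subset_closure (Function.mem_support.mpr hne)
      have h2 := hsub none h1
      exact h2 a.2
    have hMb : ∀ b : A, 0 < u (some b) a.val →
        |M (some b) a.val (F m) - (φ a).val (F m)| ≤ 2*εsec := by
      intro b hpos
      have h1 : a.val ∈ tsupport (u (some b)) := subset_closure (Function.mem_support.mpr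
        (ne_of_gt hpos))
      have h2 : a.val ∈ U b := hsub (some b) h1
      obtain ⟨hWz, hV1z, hV2z⟩ := h2
      have h3 := hWest b ((ψ a.val).val) hWz ⟨m, hm⟩
      have h4 := hV1est b a hV1z m hm
      have h5 : M (some b) a.val (F m) = Sa b ((ψ a.val).val) (F m) := rfl
      have h6 : fvec ⟨m, hm⟩ = F m := rfl
      rw [h6] at h3
      rw [h5]
      have h7 := abs_le.mp h3
      have h8 := abs_le.mp h4
      rw [abs_le]
      constructor <;> linarith [h7.1, h7.2, h8.1, h8.2]
    have hup : comb u R M (fun z => (ψ z).val) a.val (F m) ≤ (φ a).val (F m) + 2*εsec := by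
      refine comb_le u R hψm hM hMm hR a.val (F m) ?_ ?_
      · rintro (_ | b) hpos
        · rw [hnoneA] at hpos; exact absurd hpos (lt_irrefl 0)
        · have := abs_le.mp (hMb b hpos)
          linarith [this.2]
      · have h1 : sFloor ((ψ a.val).val) (F m) ≤ ‖F m‖ := sFloor_le_norm (hψm a.val) (F m)
        have h2 : -‖F m‖ ≤ (φ a).val (F m) := neg_norm_le (φ a).2 (F m)
        have h3 := hFCn m hm
        have h4 : 0 < εsec := hεsec
        rw [hRdef]
        linarith
    have hlowex := comb_ge u R hψm hM hMm hR a.val (F m)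
    obtain ⟨o, hpos, hle⟩ := hlowex
    have hlow : (φ a).val (F m) - 2*εsec ≤ comb u R M (fun z => (ψ z).val) a.val (F m) := by
      cases o with
      | none => rw [hnoneA] at hpos; exact absurd hpos (lt_irrefl 0)
      | some b =>
          have := abs_le.mp (hMb b hpos)
          linarith [this.1]
    have harith : 2*εsec ≤ 4*(1/2)^(n+1) := by
      rw [hεsecdef]
      have : (0:ℝ) < (1/2)^(n+1) := by positivity
      linarith
    rw [abs_le]
    constructor <;> linarith
  · -- step-closeness estimate
    intro z m hm
    have hm1 : m < n+1 := by omega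
    have hMb : ∀ b : A, 0 < u (some b) z →
        |M (some b) z (F m) - Φ z (F m)| ≤ 5*(1/2)^n := by
      intro b hpos
      have h1 : z ∈ tsupport (u (some b)) := subset_closure (Function.mem_support.mpr
        (ne_of_gt hpos))
      have h2 : z ∈ U b := hsub (some b) h1
      obtain ⟨hWz, hV1z, hV2z⟩ := h2
      have h3 := hWest b ((ψ z).val) hWz ⟨m, hm1⟩
      have h6 : fvec ⟨m, hm1⟩ = F m := rfl
      rw [h6] at h3
      have h4 := hΦA b m hm
      have h5 := hV2est b z hV2z m hm1
      have h7 := abs_le.mp h3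
      have h8 := abs_le.mp h4
      have h9 := abs_le.mp h5
      have h10 : M (some b) z (F m) = Sa b ((ψ z).val) (F m) := rfl
      rw [h10]
      have harith : εsec + εsec ≤ (1/2)^n := by
        rw [hεsecdef]
        rw [show ((1:ℝ)/2)^(n+1) = (1/2)^n * (1/2) by ring]
        have : (0:ℝ) < (1/2)^n := by positivity
        linarith
      rw [abs_le]
      constructor <;> linarith [h7.1, h7.2, h8.1, h8.2, h9.1, h9.2]
    have hhalf : (0:ℝ) < (1/2)^n := by positivity
    have hup : comb u R M (fun z => (ψ z).val) z (F m) ≤ Φ z (F m) + 6*(1/2)^n := by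
      refine comb_le u R hψm hM hMm hR z (F m) ?_ ?_
      · rintro (_ | b) hpos
        · show Φ z (F m) ≤ Φ z (F m) + 6*(1/2)^n
          linarith
        · have := abs_le.mp (hMb b hpos)
          linarith [this.2]
      · have h1 : sFloor ((ψ z).val) (F m) ≤ ‖F m‖ := sFloor_le_norm (hψm z) (F m)
        have h2 : -‖F m‖ ≤ Φ z (F m) := neg_norm_le (hΦmeas z) (F m)
        have h3 := hFCn m hm1
        rw [hRdef]
        linarith
    obtain ⟨o, hpos, hle⟩ := comb_ge u R hψm hM hMm hR z (F m)
    have hlow : Φ z (F m) - 6*(1/2)^n ≤ comb u R M (fun z => (ψ z).val) z (F m) := by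
      cases o with
      | none =>
          have h5 : M none z (F m) = Φ z (F m) := rfl
          rw [h5] at hle
          linarith
      | some b =>
          have := abs_le.mp (hMb b hpos)
          linarith [this.1]
    rw [abs_le]
    constructor <;> linarith

end Step

/-! ### Recursion helper -/
theorem exists_seq_of_step {α : Type*} (P : ℕ → α → Prop) (Rel : ℕ → α → α → Prop)
    (a0 : α) (h0 : P 0 a0)
    (hstep : ∀ n a, P n a → ∃ b, P (n+1) b ∧ Rel n a b) :
    ∃ seq : ℕ → α, seq 0 = a0 ∧ (∀ n, P n (seq n)) ∧ ∀ n, Rel n (seq n) (seq (n+1)) := by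
  choose f h1 h2 using hstep
  let seqS : ∀ n : ℕ, {a : α // P n a} :=
    fun n => Nat.rec ⟨a0, h0⟩ (fun n p => ⟨f n p.1 p.2, h1 n p.1 p.2⟩) n
  exact ⟨fun n => (seqS n).1, rfl, fun n => (seqS n).2,
    fun n => h2 n (seqS n).1 (seqS n).2⟩

/-! ### The master theorem -/
section Master
variable {X Y Z : Type*} [MetricSpace X] [CompactSpace X] [Nonempty X]
  [MetricSpace Y] [CompactSpace Y] [Nonempty Y]
  [TopologicalSpace Z] [ParacompactSpace Z] [T2Space Z]

set_option maxHeartbeats 2000000 in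
theorem master (A : Set Z) (hA : IsClosed A)
    (φ : A → IdemMeasure (X × Y)) (hφ : Continuous φ)
    (ψ : Z → IdemMeasure X) (hψ : Continuous ψ)
    (hcomm : ∀ a : A, ∀ g : C(X, ℝ), (φ a).val (g.comp prX) = (ψ a.val).val g) :
    ∃ Φ : Z → IdemMeasure (X × Y), Continuous Φ ∧
      (∀ z, ∀ g : C(X, ℝ), (Φ z).val (g.comp prX) = (ψ z).val g) ∧
      (∀ a : A, Φ a = φ a) := by
  classical
  have hψv : Continuous fun z => (ψ z).val := continuous_subtype_val.comp hψ
  have hψvc : ∀ g : C(X, ℝ), Continuous fun z => (ψ z).val g :=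
    fun g => (continuous_apply g).comp hψv
  -- dense sequence
  have hne : Nonempty C(X × Y, ℝ) := ⟨0⟩
  obtain ⟨F, hF⟩ := TopologicalSpace.exists_dense_seq C(X × Y, ℝ)
  have hdense : ∀ (f₀ : C(X × Y, ℝ)) (δ : ℝ), 0 < δ → ∃ m, ‖f₀ - F m‖ < δ := by
    intro f₀ δ hδ
    obtain ⟨m, hm⟩ := Metric.denseRange_iff.mp hF f₀ δ hδ
    exact ⟨m, by rwa [dist_eq_norm] at hm⟩
  -- the iterative sequence
  obtain ⟨seq, hseq0, hGood, hClose⟩ := exists_seq_of_step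
    (P := fun n (Φ : Z → C(X × Y, ℝ) → ℝ) =>
      (∀ z, IsIdemMeasure (Φ z)) ∧ (∀ z (g : C(X, ℝ)), Φ z (g.comp prX) = (ψ z).val g) ∧
      (∀ f₀, Continuous fun z => Φ z f₀) ∧
      (∀ a : A, ∀ m, m < n → |Φ a.val (F m) - (φ a).val (F m)| ≤ 4*(1/2)^n))
    (Rel := fun n Φ Φ' => ∀ z, ∀ m, m < n → |Φ' z (F m) - Φ z (F m)| ≤ 6*(1/2)^n)
    (a0 := fun z => sFloor (ψ z).val)
    (h0 := by
      refine ⟨fun z => sFloor_isMeasure (ψ z).2, fun z g => sFloor_marginal _ g,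
        fun f₀ => hψvc (ysupCM f₀), fun a m hm => absurd hm (by omega)⟩)
    (hstep := by
      intro n Φ hG
      obtain ⟨Φ', h1, h2, h3, h4, h5⟩ := step_lemma A hA φ hφ ψ hψ hcomm F n Φ
        hG.1 hG.2.1 hG.2.2.1 hG.2.2.2
      exact ⟨Φ', ⟨h1, h2, h3, h4⟩, h5⟩)
  have hpow : ∀ n : ℕ, (0:ℝ) < (1/2)^n := fun n => by positivity
  have hpowle : ∀ {n n' : ℕ}, n ≤ n' → ((1:ℝ)/2)^n' ≤ (1/2)^n := fun {n n'} h =>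
    pow_le_pow_of_le_one (by norm_num) (by norm_num) h
  -- telescoping estimate
  have htel : ∀ (z : Z) (m n n' : ℕ), m < n → n ≤ n' →
      |seq n' z (F m) - seq n z (F m)| ≤ 12*((1/2)^n - (1/2)^n') := by
    intro z m n n' hm hn
    induction n', hn using Nat.le_induction with
    | base => simp
    | succ n' hn ih =>
        have h1 := hClose n' z m (by omega)
        have h2 : (12:ℝ)*(1/2)^(n'+1) = 6*(1/2)^n' := by ring
        have h3 := abs_le.mp h1
        have h4 := abs_le.mp ih
        rw [abs_le]
        constructor <;> (push_cast; nlinarith [h3.1, h3.2, h4.1, h4.2])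
  have htel' : ∀ (z : Z) (m n n' : ℕ), m < n → n ≤ n' →
      |seq n' z (F m) - seq n z (F m)| ≤ 12*(1/2)^n := by
    intro z m n n' hm hn
    have h1 := htel z m n n' hm hn
    have h2 := hpow n'
    linarith
  -- Cauchy and limit
  have hCauchy : ∀ (z : Z) (f₀ : C(X × Y, ℝ)), CauchySeq (fun n => seq n z f₀) := by
    intro z f₀
    rw [Metric.cauchySeq_iff']
    intro δ hδ
    obtain ⟨m, hm⟩ := hdense f₀ (δ/8) (by linarith)
    obtain ⟨n₁, hn₁⟩ := exists_pow_lt_of_lt_one (x := δ/48) (y := (1:ℝ)/2)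
      (by linarith) (by norm_num)
    refine ⟨max (m+1) n₁, fun n hn => ?_⟩
    set N := max (m+1) n₁ with hN
    have hmN : m < N := lt_of_lt_of_le (Nat.lt_succ_self m) (le_max_left _ _)
    have h1 : |seq n z f₀ - seq n z (F m)| ≤ ‖f₀ - F m‖ :=
      nonexpansive ((hGood n).1 z) f₀ (F m)
    have h2 : |seq N z f₀ - seq N z (F m)| ≤ ‖f₀ - F m‖ :=
      nonexpansive ((hGood N).1 z) f₀ (F m)
    have h3 := htel' z m N n hmN hn
    have h4 : ((1:ℝ)/2)^N ≤ (1/2)^n₁ := hpowle (le_max_right _ _)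
    have h5 := abs_le.mp h1
    have h6 := abs_le.mp h2
    have h7 := abs_le.mp h3
    rw [Real.dist_eq, abs_lt]
    constructor <;> nlinarith [h5.1, h5.2, h6.1, h6.2, h7.1, h7.2]
  have hconv : ∀ (z : Z) (f₀ : C(X × Y, ℝ)), ∃ l, Filter.Tendsto (fun n => seq n z f₀)
      Filter.atTop (nhds l) := fun z f₀ => cauchySeq_tendsto_of_complete (hCauchy z f₀)
  choose L hL using hconv
  -- limit estimates
  have hLest : ∀ (z : Z) (m n : ℕ), m < n → |L z (F m) - seq n z (F m)| ≤ 12*(1/2)^n := by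
    intro z m n hm
    have h1 : Filter.Tendsto (fun n' => |seq n' z (F m) - seq n z (F m)|)
        Filter.atTop (nhds (|L z (F m) - seq n z (F m)|)) :=
      ((hL z (F m)).sub tendsto_const_nhds).abs
    refine le_of_tendsto h1 ?_
    refine Filter.eventually_atTop.mpr ⟨n, fun n' hn' => htel' z m n n' hm hn'⟩
  -- the limit is a measure with the right marginal
  have hLmeas : ∀ z, IsIdemMeasure (L z) := by
    intro z
    refine ⟨fun c => ?_, fun c f₀ => ?_, fun f₀ f₁ => ?_⟩
    · have heq : (fun n => seq n z (ContinuousMap.const (X × Y) c)) = fun _ => c :=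
        funext fun n => ((hGood n).1 z).1 c
      have h1 := hL z (ContinuousMap.const (X × Y) c)
      rw [heq] at h1
      exact tendsto_nhds_unique h1 tendsto_const_nhds
    · have heq : (fun n => seq n z (ContinuousMap.const (X × Y) c + f₀))
          = fun n => c + seq n z f₀ := funext fun n => ((hGood n).1 z).2.1 c f₀
      have h1 := hL z (ContinuousMap.const (X × Y) c + f₀)
      rw [heq] at h1
      exact tendsto_nhds_unique h1 (tendsto_const_nhds.add (hL z f₀))
    · have heq : (fun n => seq n z (f₀ ⊔ f₁))
          = fun n => max (seq n z f₀) (seq n z f₁) := funext fun n => ((hGood n).1 z).2.2 f₀ f₁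
      have h1 := hL z (f₀ ⊔ f₁)
      rw [heq] at h1
      exact tendsto_nhds_unique h1 ((hL z f₀).max (hL z f₁))
  have hLmarg : ∀ z (g : C(X, ℝ)), L z (g.comp prX) = (ψ z).val g := by
    intro z g
    have heq : (fun n => seq n z (g.comp prX)) = fun _ => (ψ z).val g :=
      funext fun n => (hGood n).2.1 z g
    have h1 := hL z (g.comp prX)
    rw [heq] at h1
    exact tendsto_nhds_unique h1 tendsto_const_nhds
  -- boundary values
  have hLA : ∀ (a : A) (f₀ : C(X × Y, ℝ)), L a.val f₀ = (φ a).val f₀ := by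
    have hcoord : ∀ (a : A) (m : ℕ), L a.val (F m) = (φ a).val (F m) := by
      intro a m
      have key : ∀ δ : ℝ, 0 < δ → |L a.val (F m) - (φ a).val (F m)| ≤ δ := by
        intro δ hδ
        obtain ⟨n₁, hn₁⟩ := exists_pow_lt_of_lt_one (x := δ/16) (y := (1:ℝ)/2)
          (by linarith) (by norm_num)
        set n := max n₁ (m+1) with hn
        have hmn : m < n := lt_of_lt_of_le (Nat.lt_succ_self m) (le_max_right _ _)
        have h1 := hLest a.val m n hmn
        have h2 := (hGood n).2.2.2 a m hmn
        have h3 : ((1:ℝ)/2)^n ≤ (1/2)^n₁ := hpowle (le_max_left _ _)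
        have h4 := abs_le.mp h1
        have h5 := abs_le.mp h2
        rw [abs_le]
        constructor <;> nlinarith [h4.1, h4.2, h5.1, h5.2]
      by_contra hne
      have hpos : 0 < |L a.val (F m) - (φ a).val (F m)| :=
        abs_pos.mpr (sub_ne_zero.mpr hne)
      have := key (|L a.val (F m) - (φ a).val (F m)|/2) (by linarith)
      linarith
    intro a f₀
    have key : ∀ δ : ℝ, 0 < δ → |L a.val f₀ - (φ a).val f₀| ≤ δ := by
      intro δ hδ
      obtain ⟨m, hm⟩ := hdense f₀ (δ/2) (by linarith)
      have h1 : |L a.val f₀ - L a.val (F m)| ≤ ‖f₀ - F m‖ :=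
        nonexpansive (hLmeas a.val) f₀ (F m)
      have h2 : |(φ a).val f₀ - (φ a).val (F m)| ≤ ‖f₀ - F m‖ :=
        nonexpansive (φ a).2 f₀ (F m)
      have h3 := hcoord a m
      have h4 := abs_le.mp h1
      have h5 := abs_le.mp h2
      rw [abs_le]
      constructor <;> nlinarith [h4.1, h4.2, h5.1, h5.2]
    by_contra hne
    have hpos : 0 < |L a.val f₀ - (φ a).val f₀| := abs_pos.mpr (sub_ne_zero.mpr hne)
    have := key (|L a.val f₀ - (φ a).val f₀|/2) (by linarith)
    linarith
  -- continuity of the limit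
  have hLcont : ∀ f₀, Continuous fun z => L z f₀ := by
    intro f₀
    have huni : TendstoUniformly (fun n z => seq n z f₀) (fun z => L z f₀) Filter.atTop := by
      rw [Metric.tendstoUniformly_iff]
      intro δ hδ
      obtain ⟨m, hm⟩ := hdense f₀ (δ/8) (by linarith)
      obtain ⟨n₁, hn₁⟩ := exists_pow_lt_of_lt_one (x := δ/96) (y := (1:ℝ)/2)
        (by linarith) (by norm_num)
      refine Filter.eventually_atTop.mpr ⟨max (m+1) n₁, fun n hn => fun z => ?_⟩
      have hmn : m < n := lt_of_lt_of_le (Nat.lt_succ_self m)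
        ((le_max_left _ _).trans hn)
      have h1 : |L z f₀ - L z (F m)| ≤ ‖f₀ - F m‖ := nonexpansive (hLmeas z) f₀ (F m)
      have h2 : |seq n z f₀ - seq n z (F m)| ≤ ‖f₀ - F m‖ :=
        nonexpansive ((hGood n).1 z) f₀ (F m)
      have h3 := hLest z m n hmn
      have h4 : ((1:ℝ)/2)^n ≤ (1/2)^n₁ := hpowle ((le_max_right _ _).trans hn)
      have h5 := abs_le.mp h1
      have h6 := abs_le.mp h2
      have h7 := abs_le.mp h3
      rw [Real.dist_eq, abs_lt]
      constructor <;> nlinarith [h5.1, h5.2, h6.1, h6.2, h7.1, h7.2]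
    exact huni.continuous (Filter.Frequently.of_forall fun n => (hGood n).2.2.1 f₀)
  -- assemble
  refine ⟨fun z => ⟨L z, hLmeas z⟩, ?_, fun z g => hLmarg z g, fun a => ?_⟩
  · exact Continuous.subtype_mk (continuous_pi fun f₀ => hLcont f₀) _
  · exact Subtype.ext (funext fun f₀ => hLA a f₀)

end Master
end IdemAux

/-- For nonempty compact metrizable `X`, `Y`, the map
`I(p₁) : I(X × Y) → I(X)` induced by the projection `p₁ : X × Y → X` is soft: every partial
lifting of a map from a paracompact Hausdorff space `Z` given on a closed subset `A ⊆ Z`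
extends to a global lifting. -/
theorem statement13 {X Y : Type*}
    [TopologicalSpace X] [CompactSpace X] [TopologicalSpace.MetrizableSpace X] [Nonempty X]
    [TopologicalSpace Y] [CompactSpace Y] [TopologicalSpace.MetrizableSpace Y] [Nonempty Y]
    {Z : Type*} [TopologicalSpace Z] [ParacompactSpace Z] [T2Space Z]
    (A : Set Z) (hA : IsClosed A)
    (φ : A → IdemMeasure (X × Y)) (hφ : Continuous φ)
    (ψ : Z → IdemMeasure X) (hψ : Continuous ψ)
    (hcomm : ∀ a : A, pushF ⟨Prod.fst, continuous_fst⟩ (φ a).val = (ψ a).val) :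
    ∃ Φ : Z → IdemMeasure (X × Y), Continuous Φ ∧
      (∀ z : Z, pushF ⟨Prod.fst, continuous_fst⟩ (Φ z).val = (ψ z).val) ∧
      (∀ a : A, Φ a = φ a) := by
  letI : MetricSpace X := TopologicalSpace.metrizableSpaceMetric X
  letI : MetricSpace Y := TopologicalSpace.metrizableSpaceMetric Y
  have hcomm' : ∀ a : A, ∀ g : C(X, ℝ),
      (φ a).val (g.comp IdemAux.prX) = (ψ a.val).val g := fun a g =>
    congrFun (hcomm a) g
  obtain ⟨Φ, h1, h2, h3⟩ := IdemAux.master A hA φ hφ ψ hψ hcomm'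
  exact ⟨Φ, h1, fun z => funext fun g => h2 z g, h3⟩
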